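/- arXiv:2601.15173 — 6 statements merged into one kernel-verified Lean document; each statement's English description precedes it below -/
import Mathlib

section
/- Let ℝ^d = V ⊕ W be a decomposition into complementary linear subspaces with dim V = ℓ and dim W = d−ℓ. Let K ⊆ V and L ⊆ W be convex bodies (full-dimensional in V and W respectively) containing the origin, and let Λ ⊆ V and Γ ⊆ W be lattices (full-dimensional in V and W respectively). Then for every i ∈ {1,…,d}: μ_i(K ⊕ L, Λ ⊕ Γ) = max { μ_j(K, Λ) + μ_{i−j}(L, Γ) : 0 ≤ j ≤ ℓ and 0 ≤ i−j ≤ d−ℓ }. -/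
/-!
Work in `E × F` and transport along `V × W ≃ₗ V ⊕ W` at the end. A point `(v, w)` lies in
`μ (K ⊕ L) + Λ × Γ` exactly when `v ∈ μ₁ K + Λ` and `w ∈ μ₂ L + Γ` for some split `μ₁ + μ₂ = μ`
of `μ` into nonnegative parts.

Lower bound: if `μ₁ < μ_j(K, Λ)` and `μ₂ < μ_{i-j}(L, Γ)`, there are affine subspaces `U_E`, `U_F`
of codimensions `j` and `i - j` missed by every `s K + Λ` with `s ≤ μ₁`, resp. every `s L + Γ`
with `s ≤ μ₂`. Then `μ(K ⊕ L) + Λ × Γ` can meet the codimension-`i` subspace `U_E × U_F` only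
if `μ > μ₁ + μ₂`.

Upper bound: an affine subspace `U` of codimension `i` projects onto an affine subspace of `E` of
some codimension `j`, and by rank–nullity its fibres are affine subspaces of `F` of codimension
`i - j`. Split `μ > μ_j(K, Λ) + μ_{i-j}(L, Γ)` as `μ₁ + μ₂` with both parts admissible, hit the
projection with `μ₁ K + Λ`, and then the fibre above the hit with `μ₂ L + Γ`.
-/

open scoped Pointwise

/-- The `i`-th covering minimum of a convex body `K` with respect to a lattice,
given as a set `L`, inside the ambient space `E`. -/
noncomputable def covMin {E : Type*} [AddCommGroup E] [Module ℝ E]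
    (i : ℕ) (K L : Set E) : ℝ :=
  sInf {μ : ℝ | 0 ≤ μ ∧ ∀ U : AffineSubspace ℝ E, (U : Set E).Nonempty →
    Module.finrank ℝ U.direction = Module.finrank ℝ E - i →
    ((μ • K + L) ∩ (U : Set E)).Nonempty}

/-- A convex body: a compact convex set with nonempty interior (full-dimensional). -/
def IsConvexBody {E : Type*} [AddCommGroup E] [Module ℝ E] [TopologicalSpace E]
    (K : Set E) : Prop :=
  Convex ℝ K ∧ IsCompact K ∧ (interior K).Nonempty

open Module Set

section CoveringSet

variable {E F : Type*} [AddCommGroup E] [Module ℝ E] [AddCommGroup F] [Module ℝ F]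
  {i : ℕ} {K Λ : Set E}

/-- The admissible dilation factors: `covMin i K Λ` is definitionally `sInf (covSet i K Λ)`. -/
def covSet (i : ℕ) (K Λ : Set E) : Set ℝ :=
  {μ : ℝ | 0 ≤ μ ∧ ∀ U : AffineSubspace ℝ E, (U : Set E).Nonempty →
    finrank ℝ U.direction = finrank ℝ E - i → ((μ • K + Λ) ∩ U).Nonempty}

theorem bddBelow_covSet : BddBelow (covSet i K Λ) := ⟨0, fun _ hμ => hμ.1⟩

theorem covMin_nonneg : 0 ≤ covMin i K Λ := Real.sInf_nonneg fun _ hμ => hμ.1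

theorem Convex.smul_subset_smul_of_zero_mem (hK : Convex ℝ K) (h0 : 0 ∈ K) {s t : ℝ}
    (hs : 0 ≤ s) (hst : s ≤ t) : s • K ⊆ t • K := by
  rcases (hs.trans hst).eq_or_lt with rfl | ht
  · rw [le_antisymm hst hs]
  rintro _ ⟨x, hx, rfl⟩
  refine ⟨(s / t) • x,
    hK.smul_mem_of_zero_mem h0 hx ⟨by positivity, div_le_one_of_le₀ hst ht.le⟩, ?_⟩
  simp only [smul_smul, mul_div_cancel₀ _ ht.ne']

theorem isUpperSet_covSet (hK : Convex ℝ K) (h0 : 0 ∈ K) : IsUpperSet (covSet i K Λ) := by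
  intro μ μ' hμμ' hμ
  refine ⟨hμ.1.trans hμμ', fun U hU hdim => ?_⟩
  obtain ⟨z, hz, hzU⟩ := hμ.2 U hU hdim
  exact ⟨z, add_subset_add_right (hK.smul_subset_smul_of_zero_mem h0 hμ.1 hμμ') hz, hzU⟩

theorem exists_affineSubspace_finrank_eq [FiniteDimensional ℝ E] {k : ℕ} (hk : k ≤ finrank ℝ E) :
    ∃ U : AffineSubspace ℝ E, (U : Set E).Nonempty ∧ finrank ℝ U.direction = k := by
  let b := Module.finBasis ℝ E
  refine ⟨AffineSubspace.mk' 0 (Submodule.span ℝ (range (b ∘ Fin.castLE hk))),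
    ⟨0, AffineSubspace.self_mem_mk' _ _⟩, ?_⟩
  rw [AffineSubspace.direction_mk',
    finrank_span_eq_card (b.linearIndependent.comp _ (Fin.castLE_injective hk)), Fintype.card_fin]

theorem exists_affineSubspace_forall_lt_of_notMem_covSet [FiniteDimensional ℝ E]
    (hK : Convex ℝ K) (h0 : 0 ∈ K) {μ : ℝ} (hμ : μ ∉ covSet i K Λ) :
    ∃ U : AffineSubspace ℝ E, (U : Set E).Nonempty ∧ finrank ℝ U.direction = finrank ℝ E - i ∧
      ∀ s, 0 ≤ s → ((s • K + Λ) ∩ U).Nonempty → μ < s := by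
  rcases lt_or_ge μ 0 with hμ0 | hμ0
  · obtain ⟨U, hU, hdim⟩ := exists_affineSubspace_finrank_eq (Nat.sub_le (finrank ℝ E) i)
    exact ⟨U, hU, hdim, fun s hs _ => hμ0.trans_le hs⟩
  simp only [covSet, mem_ofPred_eq, not_and, not_forall] at hμ
  obtain ⟨U, hU, hdim, hmiss⟩ := hμ hμ0
  refine ⟨U, hU, hdim, fun s hs hhit => lt_of_not_ge fun hsμ => hmiss ?_⟩
  obtain ⟨z, hz, hzU⟩ := hhit
  exact ⟨z, add_subset_add_right (hK.smul_subset_smul_of_zero_mem h0 hs hsμ) hz, hzU⟩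

theorem covSet_subset_covSet_image (e : E ≃ₗ[ℝ] F) :
    covSet i K Λ ⊆ covSet i (e '' K) (e '' Λ) := by
  rintro μ ⟨hμ, hcov⟩
  refine ⟨hμ, fun U hU hdim => ?_⟩
  let U' := U.map e.symm.toLinearMap.toAffineMap
  have hdim' : finrank ℝ U'.direction = finrank ℝ E - i := by
    rw [AffineSubspace.map_direction, e.finrank_eq]
    exact (e.symm.finrank_map_eq U.direction).trans hdim
  obtain ⟨z, hz, hzU'⟩ := hcov U' (hU.image _) hdim'
  obtain ⟨u, hu, rfl⟩ := AffineSubspace.mem_map.mp hzU'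
  refine ⟨u, ?_, hu⟩
  rw [← image_smul_set, ← image_add]
  exact ⟨_, hz, e.apply_symm_apply u⟩

theorem covMin_image_linearEquiv (e : E ≃ₗ[ℝ] F) (i : ℕ) (K Λ : Set E) :
    covMin i (e '' K) (e '' Λ) = covMin i K Λ := by
  refine congrArg sInf ((covSet_subset_covSet_image e).antisymm' ?_)
  simpa only [image_image, LinearEquiv.symm_apply_apply, image_id'] using
    covSet_subset_covSet_image (i := i) (K := e '' K) (Λ := e '' Λ) e.symm

end CoveringSet

theorem Submodule.finrank_map_fst_add_finrank_comap_inr {k E F : Type*} [DivisionRing k]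
    [AddCommGroup E] [Module k E] [AddCommGroup F] [Module k F]
    [FiniteDimensional k E] [FiniteDimensional k F] (D : Submodule k (E × F)) :
    finrank k (D.map (LinearMap.fst k E F)) + finrank k (D.comap (LinearMap.inr k E F)) =
      finrank k D := by
  let f := (LinearMap.fst k E F).domRestrict D
  let g : D.comap (LinearMap.inr k E F) →ₗ[k] D := (LinearMap.inr k E F).restrict fun _ h => h
  have hg : Function.Injective g := fun a b hab =>
    Subtype.ext (congrArg (fun z : D => (z : E × F).2) hab)
  have hker : LinearMap.range g = LinearMap.ker f := by
    ext ⟨⟨z₁, z₂⟩, hz⟩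
    constructor
    · rintro ⟨w, hw⟩
      simp [← hw, f, g]
    · rintro (rfl : z₁ = 0)
      exact ⟨⟨z₂, hz⟩, rfl⟩
  rw [← LinearMap.finrank_range_add_finrank_ker f, ← hker, LinearMap.finrank_range_of_inj hg,
    LinearMap.range_domRestrict]

theorem exists_add_eq_of_csInf_add_csInf_lt {S T : Set ℝ} (hTup : IsUpperSet T)
    (hSne : S.Nonempty) (hTne : T.Nonempty) {μ : ℝ} (h : sInf S + sInf T < μ) :
    ∃ a ∈ S, ∃ b ∈ T, a + b = μ := by
  obtain ⟨a, ha, haμ⟩ := exists_lt_of_csInf_lt hSne (lt_sub_iff_add_lt.2 h)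
  obtain ⟨b, hb, hbμ⟩ := exists_lt_of_csInf_lt hTne (lt_sub_comm.1 haμ)
  exact ⟨a, ha, μ - a, hTup hbμ.le hb, add_sub_cancel a μ⟩

theorem csInf_eq_csSup_of_forall_lt_mem {S A : Set ℝ} (hAne : A.Nonempty) (hAbdd : BddAbove A)
    (hle : ∀ μ ∈ S, ∀ a ∈ A, a ≤ μ) (hmem : ∀ μ, (∀ a ∈ A, a < μ) → μ ∈ S) :
    sInf S = sSup A := by
  have hmem' : ∀ μ, sSup A < μ → μ ∈ S := fun μ hμ =>
    hmem μ fun a ha => (le_csSup hAbdd ha).trans_lt hμ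
  obtain ⟨a, ha⟩ := hAne
  refine le_antisymm (le_of_forall_gt_imp_ge_of_dense fun μ hμ =>
    csInf_le ⟨a, fun ν hν => hle ν hν a ha⟩ (hmem' μ hμ)) ?_
  exact le_csInf ⟨_, hmem' _ (lt_add_one _)⟩ fun μ hμ => csSup_le ⟨a, ha⟩ (hle μ hμ)

section FreeSum

variable {E F : Type*} [AddCommGroup E] [Module ℝ E] [AddCommGroup F] [Module ℝ F]
  {K Λ : Set E} {L Γ : Set F}

/-- The direct sum `K ⊕ L` of the two bodies, realised in `E × F`. -/
def freeSum (K : Set E) (L : Set F) : Set (E × F) :=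
  {p | ∃ x ∈ K, ∃ y ∈ L, ∃ t : ℝ, t ∈ Icc (0 : ℝ) 1 ∧ p = (t • x, (1 - t) • y)}

theorem mem_smul_freeSum_add_prod_iff {μ : ℝ} (hμ : 0 ≤ μ) {z : E × F} :
    z ∈ μ • freeSum K L + Λ ×ˢ Γ ↔ ∃ μ₁ μ₂ : ℝ, 0 ≤ μ₁ ∧ 0 ≤ μ₂ ∧ μ₁ + μ₂ = μ ∧
      z.1 ∈ μ₁ • K + Λ ∧ z.2 ∈ μ₂ • L + Γ := by
  constructor
  · rintro ⟨_, ⟨_, ⟨x, hx, y, hy, t, ht, rfl⟩, rfl⟩, ab, hab, rfl⟩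
    refine ⟨μ * t, μ * (1 - t), mul_nonneg hμ ht.1, mul_nonneg hμ (sub_nonneg.2 ht.2), by ring,
      add_mem_add ?_ hab.1, add_mem_add ?_ hab.2⟩ <;>
    simpa only [Prod.smul_mk, mul_smul] using smul_mem_smul_set (smul_mem_smul_set ‹_›)
  · rintro ⟨μ₁, μ₂, hμ₁, hμ₂, rfl, ⟨_, ⟨x, hx, rfl⟩, a, ha, h₁⟩, ⟨_, ⟨y, hy, rfl⟩, b, hb, h₂⟩⟩
    -- also when `μ₁ + μ₂ = 0`: then `μ₁ = 0`, so the junk value `μ₁ / 0 = 0` is harmless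
    have ht : (μ₁ + μ₂) * (μ₁ / (μ₁ + μ₂)) = μ₁ :=
      mul_div_cancel_of_imp' fun h => by linarith
    refine ⟨_, smul_mem_smul_set ⟨x, hx, y, hy, μ₁ / (μ₁ + μ₂),
      ⟨by positivity, div_le_one_of_le₀ (by linarith) (by positivity)⟩, rfl⟩, (a, b), ⟨ha, hb⟩, ?_⟩
    ext
    · simp [smul_smul, ht, ← h₁]
    · simp [smul_smul, mul_one_sub, ht, ← h₂]

variable [FiniteDimensional ℝ E] [FiniteDimensional ℝ F]

theorem add_lt_of_mem_covSet_freeSum (hK : Convex ℝ K) (h0K : 0 ∈ K) (hL : Convex ℝ L)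
    (h0L : 0 ∈ L) {i j : ℕ} (hjE : j ≤ finrank ℝ E) (hji : j ≤ i) (hijF : i - j ≤ finrank ℝ F)
    {μ μ₁ μ₂ : ℝ} (hμ : μ ∈ covSet i (freeSum K L) (Λ ×ˢ Γ)) (hμ₁ : μ₁ ∉ covSet j K Λ)
    (hμ₂ : μ₂ ∉ covSet (i - j) L Γ) : μ₁ + μ₂ < μ := by
  obtain ⟨UE, ⟨pE, hpE⟩, hdimE, hltE⟩ :=
    exists_affineSubspace_forall_lt_of_notMem_covSet hK h0K hμ₁
  obtain ⟨UF, ⟨pF, hpF⟩, hdimF, hltF⟩ :=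
    exists_affineSubspace_forall_lt_of_notMem_covSet hL h0L hμ₂
  have hdim : finrank ℝ (UE.prod UF).direction = finrank ℝ (E × F) - i := by
    rw [AffineSubspace.direction_prod_eq ((UE.nonempty_iff_ne_bot).1 ⟨pE, hpE⟩)
        ((UF.nonempty_iff_ne_bot).1 ⟨pF, hpF⟩),
      ← (UE.direction.prod UF.direction).finrank_map_fst_add_finrank_comap_inr,
      Submodule.prod_map_fst, Submodule.prod_comap_inr, hdimE, hdimF, finrank_prod]
    omega
  obtain ⟨z, hz, hzE, hzF⟩ := hμ.2 (UE.prod UF) ⟨(pE, pF), hpE, hpF⟩ hdim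
  obtain ⟨s₁, s₂, hs₁, hs₂, rfl, hz₁, hz₂⟩ := (mem_smul_freeSum_add_prod_iff hμ.1).1 hz
  exact add_lt_add (hltE s₁ hs₁ ⟨_, hz₁, hzE⟩) (hltF s₂ hs₂ ⟨_, hz₂, hzF⟩)

theorem covMin_add_covMin_le_of_mem_covSet_freeSum (hK : Convex ℝ K) (h0K : 0 ∈ K)
    (hL : Convex ℝ L) (h0L : 0 ∈ L) {i j : ℕ} (hjE : j ≤ finrank ℝ E) (hji : j ≤ i)
    (hijF : i - j ≤ finrank ℝ F) {μ : ℝ} (hμ : μ ∈ covSet i (freeSum K L) (Λ ×ˢ Γ)) :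
    covMin j K Λ + covMin (i - j) L Γ ≤ μ := by
  by_contra! h
  set δ := (covMin j K Λ + covMin (i - j) L Γ - μ) / 2 with hδ
  have := add_lt_of_mem_covSet_freeSum hK h0K hL h0L hjE hji hijF hμ
    (notMem_of_lt_csInf (show covMin j K Λ - δ < covMin j K Λ by linarith) bddBelow_covSet)
    (notMem_of_lt_csInf (show covMin (i - j) L Γ - δ < covMin (i - j) L Γ by linarith)
      bddBelow_covSet)
  linarith

theorem mem_covSet_freeSum (hL : Convex ℝ L) (h0L : 0 ∈ L)
    (hKΛ : ∀ j, (covSet j K Λ).Nonempty) (hLΓ : ∀ j, (covSet j L Γ).Nonempty) {i : ℕ}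
    (hi : i ≤ finrank ℝ E + finrank ℝ F) {μ : ℝ}
    (hμ : ∀ j ≤ finrank ℝ E, j ≤ i → i - j ≤ finrank ℝ F →
      covMin j K Λ + covMin (i - j) L Γ < μ) :
    μ ∈ covSet i (freeSum K L) (Λ ×ˢ Γ) := by
  have hμ0 : 0 ≤ μ := ((add_nonneg covMin_nonneg covMin_nonneg).trans_lt
    (hμ (i - finrank ℝ F) (by omega) (by omega) (by omega))).le
  refine ⟨hμ0, fun U ⟨u₀, hu₀⟩ hdim => ?_⟩
  have hrank := U.direction.finrank_map_fst_add_finrank_comap_inr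
  have hrankE := (U.direction.map (LinearMap.fst ℝ E F)).finrank_le
  have hrankF := (U.direction.comap (LinearMap.inr ℝ E F)).finrank_le
  rw [finrank_prod] at hdim
  set j := finrank ℝ E - finrank ℝ (U.direction.map (LinearMap.fst ℝ E F))
  obtain ⟨μ₁, hμ₁, μ₂, hμ₂, rfl⟩ := exists_add_eq_of_csInf_add_csInf_lt
    (isUpperSet_covSet hL h0L) (hKΛ j) (hLΓ (i - j)) (hμ j (by omega) (by omega) (by omega))
  obtain ⟨_, hp, hpU⟩ := hμ₁.2 (U.map (LinearMap.fst ℝ E F).toAffineMap)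
    ⟨_, AffineSubspace.mem_map_of_mem _ hu₀⟩
    (by rw [AffineSubspace.map_direction, LinearMap.toAffineMap_linear]; omega)
  obtain ⟨u, hu, rfl⟩ := AffineSubspace.mem_map.1 hpU
  obtain ⟨q, hq, hqU⟩ := hμ₂.2
    (AffineSubspace.mk' u.2 (U.direction.comap (LinearMap.inr ℝ E F)))
    ⟨_, AffineSubspace.self_mem_mk' _ _⟩ (by rw [AffineSubspace.direction_mk']; omega)
  refine ⟨(u.1, q), (mem_smul_freeSum_add_prod_iff hμ0).2
    ⟨μ₁, μ₂, hμ₁.1, hμ₂.1, rfl, hp, hq⟩, ?_⟩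
  have hfiber : (u.1, q) = LinearMap.inr ℝ E F (q - u.2) +ᵥ u := by ext <;> simp
  have hdir : LinearMap.inr ℝ E F (q - u.2) ∈ U.direction := AffineSubspace.mem_mk'.1 hqU
  rw [hfiber]
  exact AffineSubspace.vadd_mem_of_mem_direction hdir hu

theorem covMin_freeSum (hK : Convex ℝ K) (h0K : 0 ∈ K) (hL : Convex ℝ L) (h0L : 0 ∈ L)
    (hKΛ : ∀ j, (covSet j K Λ).Nonempty) (hLΓ : ∀ j, (covSet j L Γ).Nonempty) {i : ℕ}
    (hi : i ≤ finrank ℝ E + finrank ℝ F) :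
    covMin i (freeSum K L) (Λ ×ˢ Γ) = sSup {x : ℝ | ∃ j : ℕ, j ≤ finrank ℝ E ∧ j ≤ i ∧
      i - j ≤ finrank ℝ F ∧ x = covMin j K Λ + covMin (i - j) L Γ} := by
  have hfinite : {x : ℝ | ∃ j : ℕ, j ≤ finrank ℝ E ∧ j ≤ i ∧ i - j ≤ finrank ℝ F ∧
      x = covMin j K Λ + covMin (i - j) L Γ}.Finite :=
    ((finite_Iic i).image fun j => covMin j K Λ + covMin (i - j) L Γ).subset
      fun _ ⟨j, _, hji, _, hx⟩ => ⟨j, hji, hx.symm⟩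
  refine csInf_eq_csSup_of_forall_lt_mem ⟨_, i - finrank ℝ F, by omega, by omega, by omega, rfl⟩
    hfinite.bddAbove ?_ fun μ hμ => mem_covSet_freeSum hL h0L hKΛ hLΓ hi
      fun j hjE hji hijF => hμ _ ⟨j, hjE, hji, hijF, rfl⟩
  rintro μ hμ _ ⟨j, hjE, hji, hijF, rfl⟩
  exact covMin_add_covMin_le_of_mem_covSet_freeSum hK h0K hL h0L hjE hji hijF hμ

end FreeSum

section Lattice

variable {E : Type*} [NormedAddCommGroup E] [NormedSpace ℝ E] [FiniteDimensional ℝ E]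
  {K : Set E} {Λ : Submodule ℤ E}

theorem exists_smul_add_eq_univ (hK : (interior K).Nonempty)
    (hΛ : Submodule.span ℝ (Λ : Set E) = ⊤) : ∃ μ : ℝ, 0 ≤ μ ∧ μ • K + (Λ : Set E) = univ := by
  obtain ⟨c, hc⟩ := hK
  obtain ⟨ε, hε, hball⟩ := Metric.isOpen_iff.1 isOpen_interior c hc
  obtain ⟨ι, _, b, hbΛ⟩ : ∃ (ι : Set E) (_ : Fintype ι) (b : Basis ι ℝ E), range b ⊆ Λ :=
    let b := Basis.ofSpan hΛ.ge
    ⟨_, @Fintype.ofFinite _ (Module.Finite.finite_basis b), b, Basis.ofSpan_subset hΛ.ge⟩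
  set R := ∑ k, ‖b k‖
  set μ := (R + 1) / ε
  have hμ : 0 < μ := by positivity
  refine ⟨μ, hμ.le, eq_univ_of_forall fun x => ?_⟩
  have hfloor : (ZSpan.floor b (x - μ • c) : E) ∈ Λ :=
    Submodule.span_le.2 hbΛ (ZSpan.floor b (x - μ • c)).2
  have hfract : μ • c + ZSpan.fract b (x - μ • c) ∈ μ • K := by
    refine smul_set_mono (hball.trans interior_subset) ?_
    rw [smul_ball hμ.ne', Real.norm_of_nonneg hμ.le, mem_ball_iff_norm, add_sub_cancel_left]
    calc ‖ZSpan.fract b (x - μ • c)‖ ≤ R := ZSpan.norm_fract_le b _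
      _ < μ * ε := by rw [div_mul_cancel₀ _ hε.ne']; linarith
  refine ⟨_, hfract, _, hfloor, ?_⟩
  simp only [ZSpan.fract_apply]
  abel

theorem covSet_nonempty (hK : (interior K).Nonempty) (hΛ : Submodule.span ℝ (Λ : Set E) = ⊤)
    (i : ℕ) : (covSet i K Λ).Nonempty := by
  obtain ⟨μ, hμ, huniv⟩ := exists_smul_add_eq_univ hK hΛ
  exact ⟨μ, hμ, fun U hU _ => by rwa [huniv, univ_inter]⟩

end Lattice

section Complement

variable {E : Type*} [AddCommGroup E] [Module ℝ E] {V W : Submodule ℝ E} (hVW : IsCompl V W)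

theorem image_prodEquivOfIsCompl_freeSum (K : Set V) (L : Set W) :
    V.prodEquivOfIsCompl W hVW '' freeSum K L =
      {z | ∃ x ∈ K, ∃ y ∈ L, ∃ t : ℝ, t ∈ Icc (0 : ℝ) 1 ∧ z = t • (x : E) + (1 - t) • (y : E)} := by
  ext z
  constructor
  · rintro ⟨_, ⟨x, hx, y, hy, t, ht, rfl⟩, rfl⟩
    exact ⟨x, hx, y, hy, t, ht, rfl⟩
  · rintro ⟨x, hx, y, hy, t, ht, rfl⟩
    exact ⟨_, ⟨x, hx, y, hy, t, ht, rfl⟩, rfl⟩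

theorem image_prodEquivOfIsCompl_prod (Λ : Set V) (Γ : Set W) :
    V.prodEquivOfIsCompl W hVW '' (Λ ×ˢ Γ) = {z | ∃ a ∈ Λ, ∃ b ∈ Γ, z = (a : E) + (b : E)} := by
  ext z
  constructor
  · rintro ⟨⟨a, b⟩, ⟨ha, hb⟩, rfl⟩
    exact ⟨a, ha, b, hb, rfl⟩
  · rintro ⟨a, ha, b, hb, rfl⟩
    exact ⟨(a, b), ⟨ha, hb⟩, rfl⟩

end Complement

theorem covMin_directSum_general
    (d ℓ i : ℕ) (hid : i ≤ d)
    (V W : Submodule ℝ (Fin d → ℝ)) (hVW : IsCompl V W)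
    (hVdim : Module.finrank ℝ V = ℓ)
    (K : Set V) (L : Set W) (hK : IsConvexBody K) (hL : IsConvexBody L)
    (h0K : 0 ∈ K) (h0L : 0 ∈ L)
    (Λ : Submodule ℤ V)
    (hΛfull : Submodule.span ℝ (Λ : Set V) = ⊤)
    (Γ : Submodule ℤ W)
    (hΓfull : Submodule.span ℝ (Γ : Set W) = ⊤) :
    covMin i
        {z : Fin d → ℝ | ∃ x ∈ K, ∃ y ∈ L, ∃ t : ℝ, t ∈ Set.Icc (0 : ℝ) 1 ∧
          z = t • (x : Fin d → ℝ) + (1 - t) • (y : Fin d → ℝ)}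
        {z : Fin d → ℝ | ∃ a ∈ Λ, ∃ b ∈ Γ, z = ((a : V) : Fin d → ℝ) + ((b : W) : Fin d → ℝ)} =
      sSup {x : ℝ | ∃ j : ℕ, j ≤ ℓ ∧ j ≤ i ∧ i - j ≤ d - ℓ ∧
        x = covMin j K (Λ : Set V) + covMin (i - j) L (Γ : Set W)} := by
  have hdim : finrank ℝ V + finrank ℝ W = d := by
    rw [Submodule.finrank_add_eq_of_isCompl hVW, finrank_fin_fun]
  have key := covMin_freeSum (i := i) hK.1 h0K hL.1 h0L (covSet_nonempty hK.2.2 hΛfull)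
    (covSet_nonempty hL.2.2 hΓfull) (by omega)
  rw [← covMin_image_linearEquiv (V.prodEquivOfIsCompl W hVW), image_prodEquivOfIsCompl_freeSum,
    image_prodEquivOfIsCompl_prod] at key
  rwa [show d - ℓ = finrank ℝ W by omega, ← hVdim]

/-- **Theorem (covering minima of direct sums).** If `ℝ^d = V ⊕ W` with `dim V = ℓ`,
`K ⊆ V`, `L ⊆ W` are convex bodies containing the origin and `Λ ⊆ V`, `Γ ⊆ W` lattices, then
`μ_i(K ⊕ L, Λ ⊕ Γ) = max { μ_j(K,Λ) + μ_{i-j}(L,Γ) : 0 ≤ j ≤ ℓ, 0 ≤ i-j ≤ d-ℓ }`,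
where `K ⊕ L = {t • x + (1-t) • y : x ∈ K, y ∈ L, t ∈ [0,1]}` and
`Λ ⊕ Γ = {a + b : a ∈ Λ, b ∈ Γ}`. -/
theorem covMin_directSum
    (d ℓ i : ℕ) (hi : 1 ≤ i) (hid : i ≤ d)
    (V W : Submodule ℝ (Fin d → ℝ)) (hVW : IsCompl V W)
    (hVdim : Module.finrank ℝ V = ℓ) (hWdim : Module.finrank ℝ W = d - ℓ)
    (K : Set V) (L : Set W) (hK : IsConvexBody K) (hL : IsConvexBody L)
    (h0K : 0 ∈ K) (h0L : 0 ∈ L)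
    (Λ : Submodule ℤ V) (hΛdisc : DiscreteTopology Λ)
    (hΛfull : Submodule.span ℝ (Λ : Set V) = ⊤)
    (Γ : Submodule ℤ W) (hΓdisc : DiscreteTopology Γ)
    (hΓfull : Submodule.span ℝ (Γ : Set W) = ⊤) :
    covMin i
        {z : Fin d → ℝ | ∃ x ∈ K, ∃ y ∈ L, ∃ t : ℝ, t ∈ Set.Icc (0 : ℝ) 1 ∧
          z = t • (x : Fin d → ℝ) + (1 - t) • (y : Fin d → ℝ)}
        {z : Fin d → ℝ | ∃ a ∈ Λ, ∃ b ∈ Γ, z = ((a : V) : Fin d → ℝ) + ((b : W) : Fin d → ℝ)} =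
      sSup {x : ℝ | ∃ j : ℕ, j ≤ ℓ ∧ j ≤ i ∧ i - j ≤ d - ℓ ∧
        x = covMin j K (Λ : Set V) + covMin (i - j) L (Γ : Set W)} :=
  covMin_directSum_general d ℓ i hid V W hVW hVdim K L hK hL h0K h0L Λ hΛfull Γ hΓfull
end

section
/- Let K ⊆ ℝ^d be a convex body, Λ ⊆ ℝ^d a lattice and {f_1, …, f_d} a basis of Λ. For I a subset of {1,…,d} of cardinality i, let L_I = span_ℝ{f_j : j ∈ I}. If dim(K ∩ L_I) = i for every i-element subset I of {1,…,d}, then μ_i(K, Λ) ≤ max { μ(K ∩ L_I, Λ ∩ L_I) : I ⊆ {1,…,d}, |I| = i }. -/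
open scoped Pointwise

/-- The covering radius of `K` with respect to a lattice, given as a set `L`. -/
noncomputable def covRad {E : Type*} [AddCommGroup E] [Module ℝ E]
    (K L : Set E) : ℝ :=
  sInf {μ : ℝ | 0 ≤ μ ∧ μ • K + L = Set.univ}

/-- The coordinate subspace `L_I` spanned by the basis vectors `f j`, `j ∈ I`,
of a lattice basis `f` of `Λ`. -/
def coordSpan {d : ℕ} (Λ : Submodule ℤ (Fin d → ℝ)) (f : Module.Basis (Fin d) ℤ Λ)
    (I : Finset (Fin d)) : Submodule ℝ (Fin d → ℝ) :=
  Submodule.span ℝ ((fun j => ((f j : Λ) : Fin d → ℝ)) '' (I : Set (Fin d)))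

/-!
Fix `μ` larger than every covering radius `μ(K ∩ L_I, Λ ∩ L_I)` and an affine subspace `U` of
dimension `d - i`. The images of `f_1, …, f_d` span `ℝ^d ⧸ dir U`, so `i` of them, indexed by `I`,
span a complement `L_I` of `dir U`, and `U` meets `L_I` in a point `p`. As `K ∩ L_I` is
`i`-dimensional it has interior in `L_I`, so `μ (K ∩ L_I) + Λ ∩ L_I` covers `L_I`; in particular
`p ∈ μ K + Λ`.
-/

open Module Set Submodule

theorem covRad_nonneg {E : Type*} [AddCommGroup E] [Module ℝ E] (K Γ : Set E) :
    0 ≤ covRad K Γ :=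
  Real.sInf_nonneg fun _ h => h.1

theorem Convex.smul_add_eq_univ_of_le {E : Type*} [AddCommGroup E] [Module ℝ E]
    {K Γ : Set E} (hK : Convex ℝ K) (hne : K.Nonempty) {a μ : ℝ} (ha : 0 ≤ a) (haμ : a ≤ μ)
    (h : a • K + Γ = univ) : μ • K + Γ = univ := by
  rw [← add_sub_cancel a μ, hK.add_smul ha (sub_nonneg.2 haμ), add_right_comm, h,
    univ_add hne.smul_set]

theorem exists_smul_add_eq_univ_s2 {F : Type*} [NormedAddCommGroup F] [NormedSpace ℝ F]
    {K Γ : Set F} (hK : (interior K).Nonempty) {R : ℝ} (hΓ : ∀ x, ∃ g ∈ Γ, ‖x - g‖ ≤ R) :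
    ∃ μ : ℝ, 0 ≤ μ ∧ μ • K + Γ = univ := by
  obtain ⟨c, hc⟩ := hK
  have hnhds : -c +ᵥ K ∈ nhds (0 : F) := by
    simpa using (vadd_mem_nhds_vadd_iff (-c)).2 (mem_interior_iff_mem_nhds.1 hc)
  obtain ⟨r, hr, hball⟩ := (NormedSpace.isVonNBounded_closedBall ℝ F R hnhds).exists_pos
  refine ⟨r, hr.le, eq_univ_of_forall fun y => ?_⟩
  obtain ⟨g, hg, hyg⟩ := hΓ (y - r • c)
  obtain ⟨_, ⟨k, hk, rfl⟩, hk'⟩ := hball r (by rw [Real.norm_of_nonneg hr.le])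
    (mem_closedBall_zero_iff.2 hyg)
  refine ⟨r • k, smul_mem_smul_set hk, g, hg, ?_⟩
  simp only [vadd_eq_add, smul_add, smul_neg] at hk' ⊢
  linear_combination (norm := module) hk'

theorem smul_add_eq_univ_of_covRad_lt {F : Type*} [NormedAddCommGroup F] [NormedSpace ℝ F]
    {K Γ : Set F} (hK : Convex ℝ K) (hint : (interior K).Nonempty)
    (hΓ : ∃ R, ∀ x, ∃ g ∈ Γ, ‖x - g‖ ≤ R) {μ : ℝ} (h : covRad K Γ < μ) :
    μ • K + Γ = univ := by
  obtain ⟨R, hR⟩ := hΓ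
  obtain ⟨a, ⟨ha, hcov⟩, haμ⟩ :=
    exists_lt_of_csInf_lt (exists_smul_add_eq_univ_s2 hint hR) (h : sInf _ < μ)
  exact hK.smul_add_eq_univ_of_le (hint.mono interior_subset) ha haμ.le hcov

theorem coe_mem_smul_add_of_preimage_eq_univ {E : Type*} [AddCommGroup E] [Module ℝ E]
    {L : Submodule ℝ E} {K Γ : Set E} {μ : ℝ}
    (h : μ • ((↑) ⁻¹' K : Set L) + (↑) ⁻¹' Γ = univ) (x : L) : (x : E) ∈ μ • K + Γ := by
  obtain ⟨_, ⟨k, hk, rfl⟩, g, hg, rfl⟩ := h.symm ▸ mem_univ x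
  exact ⟨μ • k, smul_mem_smul_set hk, g, hg, rfl⟩

theorem exists_mem_span_int_norm_sub_le {ι E : Type*} [Fintype ι] [SeminormedAddCommGroup E]
    [NormedSpace ℝ E] (v : ι → E) {x : E} (hx : x ∈ span ℝ (range v)) :
    ∃ g ∈ span ℤ (range v), ‖x - g‖ ≤ ∑ j, ‖v j‖ := by
  obtain ⟨c, rfl⟩ := (mem_span_range_iff_exists_fun ℝ).1 hx
  refine ⟨∑ j, ⌊c j⌋ • v j, sum_mem fun j _ => zsmul_mem (subset_span (mem_range_self j)) _, ?_⟩
  have hfract : ∑ j, c j • v j - ∑ j, ⌊c j⌋ • v j = ∑ j, Int.fract (c j) • v j := by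
    rw [← Finset.sum_sub_distrib]
    refine Finset.sum_congr rfl fun j _ => ?_
    rw [Int.fract, sub_smul, Int.cast_smul_eq_zsmul]
  rw [hfract]
  refine (norm_sum_le _ _).trans (Finset.sum_le_sum fun j _ => ?_)
  rw [norm_smul, Real.norm_of_nonneg (Int.fract_nonneg _)]
  exact mul_le_of_le_one_left (norm_nonneg _) (Int.fract_lt_one _).le

theorem exists_finset_card_eq_finrank_quotient_sup_span_eq_top {ι K V : Type*} [Fintype ι]
    [DivisionRing K] [AddCommGroup V] [Module K V] {v : ι → V}
    (hv : span K (range v) = ⊤) (W : Submodule K V) :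
    ∃ I : Finset ι, I.card = finrank K (V ⧸ W) ∧ W ⊔ span K (v '' I) = ⊤ := by
  classical
  obtain ⟨κ, a, ha, hspan, hind⟩ := exists_linearIndependent' K (W.mkQ ∘ v)
  have : Fintype κ := Fintype.ofInjective a ha
  have hspan_top : span K (range ((W.mkQ ∘ v) ∘ a)) = ⊤ := by
    rw [hspan, range_comp, ← map_span, hv, Submodule.map_top, range_mkQ]
  refine ⟨Finset.univ.image a, ?_, ?_⟩
  · rw [Finset.card_image_of_injective _ ha, Finset.card_univ, ← finrank_span_eq_card hind,
      hspan_top, finrank_top]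
  · rw [← map_mkQ_eq_top, map_span, Finset.coe_image, Finset.coe_univ, image_univ,
      ← range_comp, ← range_comp]
    exact hspan_top

theorem interior_preimage_coe_nonempty {E : Type*} [NormedAddCommGroup E] [NormedSpace ℝ E]
    {L : Submodule ℝ E} [FiniteDimensional ℝ L] {s : Set E} (hs : Convex ℝ s)
    (hL : 0 < finrank ℝ L) (h : finrank ℝ (affineSpan ℝ (s ∩ L)).direction = finrank ℝ L) :
    (interior ((↑) ⁻¹' s : Set L)).Nonempty := by
  set t : Set L := (↑) ⁻¹' s
  have hmap : affineSpan ℝ (s ∩ L) = (affineSpan ℝ t).map L.subtype.toAffineMap := by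
    rw [AffineSubspace.map_span, ← Subtype.range_coe (s := (L : Set E)),
      ← image_preimage_eq_inter_range]
    rfl
  rw [hmap, AffineSubspace.map_direction, LinearMap.toAffineMap_linear,
    finrank_map_subtype_eq] at h
  obtain ht | hne := t.eq_empty_or_nonempty
  · rw [ht, AffineSubspace.span_empty, AffineSubspace.direction_bot, finrank_bot] at h
    omega
  have htconv : Convex ℝ t := hs.linear_preimage L.subtype
  refine htconv.interior_nonempty_iff_affineSpan_eq_top.2 ?_
  rw [← AffineSubspace.direction_eq_top_iff_of_nonempty ((affineSpan_nonempty ℝ).2 hne)]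
  exact Submodule.eq_top_of_finrank_eq h

theorem span_real_range_basis_eq_top {ι E : Type*} [AddCommGroup E] [Module ℝ E]
    {Λ : Submodule ℤ E} (f : Basis ι ℤ Λ) (hΛ : span ℝ (Λ : Set E) = ⊤) :
    span ℝ (range fun j => (f j : E)) = ⊤ := by
  have hΛ_span : span ℤ (range (Λ.subtype ∘ f)) = Λ := by
    rw [range_comp, ← map_span, f.span_eq, Submodule.map_top, range_subtype]
  rw [← span_span_of_tower ℤ]
  exact (congrArg (fun S : Submodule ℤ E => span ℝ (S : Set E)) hΛ_span).trans hΛ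

section coordSpan

variable {d : ℕ} {Λ : Submodule ℤ (Fin d → ℝ)} (f : Basis (Fin d) ℤ Λ) (I : Finset (Fin d))

theorem finrank_coordSpan (hΛ : span ℝ (Λ : Set (Fin d → ℝ)) = ⊤) :
    finrank ℝ (coordSpan Λ f I) = I.card := by
  have hind : LinearIndependent ℝ fun j => (f j : Fin d → ℝ) :=
    linearIndependent_of_top_le_span_of_card_eq_finrank
      (span_real_range_basis_eq_top f hΛ).ge (by simp)
  rw [coordSpan, image_eq_range]
  exact (finrank_span_eq_card (hind.comp _ Subtype.val_injective)).trans (by simp)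

theorem exists_norm_sub_le_coordSpan :
    ∃ R, ∀ x : coordSpan Λ f I, ∃ g ∈ ((↑) ⁻¹' (Λ : Set (Fin d → ℝ)) : Set (coordSpan Λ f I)),
      ‖x - g‖ ≤ R := by
  set v : ↥(I : Set (Fin d)) → Fin d → ℝ := fun j => f j
  have hspan : coordSpan Λ f I = span ℝ (range v) := by rw [coordSpan, image_eq_range]
  refine ⟨∑ j, ‖v j‖, fun x => ?_⟩
  obtain ⟨g, hgZ, hg⟩ := exists_mem_span_int_norm_sub_le v (by rw [← hspan]; exact x.2)
  have hvΛ : range v ⊆ Λ := range_subset_iff.2 fun j => (f j).2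
  have hgΛ : g ∈ Λ := span_le.2 hvΛ hgZ
  exact ⟨⟨g, hspan ▸ span_subset_span ℤ ℝ _ hgZ⟩, hgΛ, hg⟩

theorem smul_preimage_add_preimage_coordSpan_eq_univ {K : Set (Fin d → ℝ)} (hK : Convex ℝ K)
    (hΛ : span ℝ (Λ : Set (Fin d → ℝ)) = ⊤) (hI : 0 < I.card)
    (hdim : finrank ℝ (affineSpan ℝ (K ∩ (coordSpan Λ f I : Set (Fin d → ℝ)))).direction =
      I.card) {μ : ℝ}
    (hμ : covRad ((↑) ⁻¹' K : Set (coordSpan Λ f I)) ((↑) ⁻¹' (Λ : Set (Fin d → ℝ))) < μ) :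
    μ • ((↑) ⁻¹' K : Set (coordSpan Λ f I)) + (↑) ⁻¹' (Λ : Set (Fin d → ℝ)) = univ := by
  rw [← finrank_coordSpan f I hΛ] at hI hdim
  exact smul_add_eq_univ_of_covRad_lt (hK.linear_preimage (coordSpan Λ f I).subtype)
    (interior_preimage_coe_nonempty hK hI hdim) (exists_norm_sub_le_coordSpan f I) hμ

end coordSpan

theorem covMin_le_intersection_bound_general
    (d i : ℕ) (hi : 1 ≤ i) (hid : i ≤ d)
    (K : Set (Fin d → ℝ)) (hK : IsConvexBody K)
    (Λ : Submodule ℤ (Fin d → ℝ))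
    (hΛfull : Submodule.span ℝ (Λ : Set (Fin d → ℝ)) = ⊤)
    (f : Module.Basis (Fin d) ℤ Λ)
    (hdim : ∀ I : Finset (Fin d), I.card = i →
      Module.finrank ℝ (affineSpan ℝ (K ∩ (coordSpan Λ f I : Set (Fin d → ℝ)))).direction = i) :
    covMin i K (Λ : Set (Fin d → ℝ)) ≤
      sSup {x : ℝ | ∃ I : Finset (Fin d), I.card = i ∧
        x = covRad (Subtype.val ⁻¹' K : Set (coordSpan Λ f I))
              (Subtype.val ⁻¹' (Λ : Set (Fin d → ℝ)) : Set (coordSpan Λ f I))} := by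
  set T := {x : ℝ | ∃ I : Finset (Fin d), I.card = i ∧
        x = covRad (Subtype.val ⁻¹' K : Set (coordSpan Λ f I))
              (Subtype.val ⁻¹' (Λ : Set (Fin d → ℝ)) : Set (coordSpan Λ f I))}
  have hT : BddAbove T := by
    refine (finite_range fun I => covRad (Subtype.val ⁻¹' K : Set (coordSpan Λ f I))
      (Subtype.val ⁻¹' (Λ : Set (Fin d → ℝ)))).bddAbove.mono ?_
    rintro _ ⟨I, -, rfl⟩
    exact ⟨I, rfl⟩
  refine le_of_forall_gt_imp_ge_of_dense fun μ hμ => csInf_le ⟨0, fun _ h => h.1⟩ ⟨?_, ?_⟩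
  · refine (Real.sSup_nonneg ?_).trans hμ.le
    rintro _ ⟨I, -, rfl⟩
    exact covRad_nonneg _ _
  intro U hU hUdim
  obtain ⟨I, hIcard, hsup⟩ := exists_finset_card_eq_finrank_quotient_sup_span_eq_top
    (span_real_range_basis_eq_top f hΛfull) U.direction
  replace hIcard : I.card = i := by
    have := U.direction.finrank_quotient_add_finrank
    rw [hUdim, finrank_fin_fun] at this
    omega
  have hI : ((coordSpan Λ f I).toAffineSubspace : Set (Fin d → ℝ)).Nonempty :=
    ⟨0, (coordSpan Λ f I).zero_mem⟩
  obtain ⟨p, hpU, hpI⟩ := AffineSubspace.inter_nonempty_of_nonempty_of_sup_direction_eq_top hU hI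
    (by rwa [Submodule.toAffineSubspace_direction])
  have hcov := smul_preimage_add_preimage_coordSpan_eq_univ f I hK.1 hΛfull (by omega)
    (hIcard ▸ hdim I hIcard) ((le_csSup hT ⟨I, hIcard, rfl⟩).trans_lt hμ)
  exact ⟨p, coe_mem_smul_add_of_preimage_eq_univ hcov ⟨p, hpI⟩, hpU⟩

/-- **Theorem (intersection bound).** If `K` is a convex body, `Λ` a lattice with basis
`f_1, …, f_d`, and `dim (K ∩ L_I) = i` for every `i`-element subset `I` of `{1,…,d}`, then
`μ_i(K,Λ) ≤ max { μ(K ∩ L_I, Λ ∩ L_I) : |I| = i }`, the covering radii being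
computed inside `L_I`. -/
theorem covMin_le_intersection_bound
    (d i : ℕ) (hi : 1 ≤ i) (hid : i ≤ d)
    (K : Set (Fin d → ℝ)) (hK : IsConvexBody K)
    (Λ : Submodule ℤ (Fin d → ℝ)) (hΛdisc : DiscreteTopology Λ)
    (hΛfull : Submodule.span ℝ (Λ : Set (Fin d → ℝ)) = ⊤)
    (f : Module.Basis (Fin d) ℤ Λ)
    (hdim : ∀ I : Finset (Fin d), I.card = i →
      Module.finrank ℝ (affineSpan ℝ (K ∩ (coordSpan Λ f I : Set (Fin d → ℝ)))).direction = i) :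
    covMin i K (Λ : Set (Fin d → ℝ)) ≤
      sSup {x : ℝ | ∃ I : Finset (Fin d), I.card = i ∧
        x = covRad (Subtype.val ⁻¹' K : Set (coordSpan Λ f I))
              (Subtype.val ⁻¹' (Λ : Set (Fin d → ℝ)) : Set (coordSpan Λ f I))} :=
  covMin_le_intersection_bound_general d i hi hid K hK Λ hΛfull f hdim
end

section
/- Let K ⊆ ℝ^d be a proper locally anti-blocking body and i ∈ {1,…,d}. Then μ_i(K) = max { μ(K ∩ L_I) : I ⊆ {1,…,d}, |I| = i }, where the covering radius μ(K ∩ L_I) is computed in L_I with respect to the lattice ℤ^d ∩ L_I. -/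
open scoped Pointwise

/-- The integer lattice `ℤ^d` inside `ℝ^d`. -/
def intLat (d : ℕ) : Set (Fin d → ℝ) := {x | ∀ j, ∃ m : ℤ, x j = (m : ℝ)}

/-- The coordinate subspace `L_I = span{e_j : j ∈ I}` of `ℝ^d`. -/
def coordSubspace (d : ℕ) (I : Finset (Fin d)) : Submodule ℝ (Fin d → ℝ) where
  carrier := {x | ∀ j ∉ I, x j = 0}
  add_mem' := by
    intro a b ha hb j hj
    simp [ha j hj, hb j hj]
  zero_mem' := by intro j hj; rfl
  smul_mem' := by
    intro c x hx j hj
    simp [hx j hj]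

/-- The orthogonal projection of `ℝ^d` onto the coordinate subspace `L_I`. -/
def coordProj (d : ℕ) (I : Finset (Fin d)) (x : Fin d → ℝ) : Fin d → ℝ :=
  fun j => if j ∈ I then x j else 0

/-- `K` is locally anti-blocking if for every coordinate subspace the intersection and
orthogonal projection of `K` coincide. -/
def IsLocallyAntiBlocking {d : ℕ} (K : Set (Fin d → ℝ)) : Prop :=
  ∀ I : Finset (Fin d), K ∩ (coordSubspace d I : Set (Fin d → ℝ)) = coordProj d I '' K

/-! A dilation factor `μ ≥ 0` is admissible for `μ_i(K)` exactly when it is admissible for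
every covering radius `μ(K ∩ L_I)` with `|I| = i`. If `μ (K ∩ L_I) + (ℤ^d ∩ L_I)` covers `L_I`,
then `μ K + ℤ^d` meets every affine subspace `U` of dimension `d - i`, because `I` can be chosen
so that `L_I` is complementary to the direction of `U`. Conversely, if `μ K + ℤ^d` meets every
translate `x + L_{Iᶜ}` with `x ∈ L_I`, projecting onto `L_I` shows that `μ (K ∩ L_I) + (ℤ^d ∩ L_I)`
covers `L_I`: local anti-blocking makes the projection of `K` equal to `K ∩ L_I`. Since `K` is
star-shaped at `0`, each set of admissible factors is upward closed, so the infimum of their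
intersection is the largest of their infima. -/

open Set

theorem csInf_biInter_eq_csSup_image {α ι : Type*} [ConditionallyCompleteLinearOrder α]
    [DenselyOrdered α] [NoMaxOrder α] {S : Set ι} (hS : S.Finite) (hS₀ : S.Nonempty)
    {C : ι → Set α} (hup : ∀ j ∈ S, IsUpperSet (C j)) (hne : ∀ j ∈ S, (C j).Nonempty)
    (hbdd : ∀ j ∈ S, BddBelow (C j)) :
    sInf (⋂ j ∈ S, C j) = sSup ((fun j => sInf (C j)) '' S) := by
  set m := sSup ((fun j => sInf (C j)) '' S)
  have hle_m : ∀ j ∈ S, sInf (C j) ≤ m := fun j hj =>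
    le_csSup (hS.image _).bddAbove (mem_image_of_mem _ hj)
  have hIoi : Ioi m ⊆ ⋂ j ∈ S, C j := by
    refine fun x hx => mem_iInter₂.mpr fun j hj => ?_
    obtain ⟨y, hy, hyx⟩ := exists_lt_of_csInf_lt (hne j hj) ((hle_m j hj).trans_lt hx)
    exact hup j hj hyx.le hy
  have hne_inter : (⋂ j ∈ S, C j).Nonempty := (nonempty_Ioi (a := m)).mono hIoi
  obtain ⟨j₀, hj₀⟩ := id hS₀
  have hbdd_inter : BddBelow (⋂ j ∈ S, C j) :=
    (hbdd j₀ hj₀).mono (biInter_subset_of_mem hj₀)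
  refine le_antisymm ?_ (csSup_le (hS₀.image _) ?_)
  · calc sInf (⋂ j ∈ S, C j) ≤ sInf (Ioi m) := csInf_le_csInf hbdd_inter nonempty_Ioi hIoi
      _ = m := csInf_Ioi
  · rintro _ ⟨j, hj, rfl⟩
    exact csInf_le_csInf (hbdd j hj) hne_inter (biInter_subset_of_mem hj)

theorem StarConvex.smul_set_subset_smul_set {E : Type*} [AddCommGroup E] [Module ℝ E]
    {S : Set E} (hS : StarConvex ℝ 0 S) {a b : ℝ} (ha : 0 ≤ a) (hab : a ≤ b) :
    a • S ⊆ b • S := by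
  rintro _ ⟨x, hx, rfl⟩
  rcases (ha.trans hab).eq_or_lt with rfl | hb
  · rw [le_antisymm hab ha]
    exact smul_mem_smul_set hx
  · refine ⟨(a / b) • x,
      hS.smul_mem hx (div_nonneg ha hb.le) (div_le_one_of_le₀ hab hb.le), ?_⟩
    change b • (a / b) • x = a • x
    rw [smul_smul, mul_div_cancel₀ _ hb.ne']

theorem AffineSubspace.inter_nonempty_of_sup_direction_eq_top {k V : Type*} [Ring k]
    [AddCommGroup V] [Module k V] {P : Submodule k V} {U : AffineSubspace k V}
    (hU : (U : Set V).Nonempty) (hPU : P ⊔ U.direction = ⊤) : ((P : Set V) ∩ U).Nonempty :=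
  AffineSubspace.inter_nonempty_of_nonempty_of_sup_direction_eq_top (s₁ := P.toAffineSubspace)
    ⟨0, P.zero_mem⟩ hU (by rwa [Submodule.toAffineSubspace_direction])

theorem Pi.exists_isCompl_spanSubset {K ι : Type*} [Field K] [Finite ι]
    (W : Submodule K (ι → K)) : ∃ T : Set ι, IsCompl (Pi.spanSubset K T) W := by
  classical
  set e := Pi.basisFun K ι
  obtain ⟨s, -, hspan, hli⟩ := exists_linearIndependent K (W : Set (ι → K))
  rw [Submodule.span_eq] at hspan
  obtain ⟨b, hbt, hsb, htb, hbli⟩ :=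
    exists_linearIndepOn_id_extension hli (subset_union_left (t := range e))
  have hb_top : Submodule.span K b = ⊤ := by
    refine top_le_iff.mp ?_
    calc ⊤ = Submodule.span K (range e) := e.span_eq.symm
      _ ≤ Submodule.span K b :=
        Submodule.span_le.mpr (subset_union_right.trans htb)
  have hcompl := LinearIndependent.isCompl_span_image (v := ((↑) : b → ι → K)) hbli
    (by rwa [Subtype.range_coe]) (isCompl_compl (x := (↑) ⁻¹' s))
  rw [← preimage_compl, Subtype.image_preimage_coe, Subtype.image_preimage_coe,
    inter_eq_right.mpr hsb, hspan, ← sdiff_eq] at hcompl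
  refine ⟨e ⁻¹' (b \ s), ?_⟩
  have hdiff : b \ s ⊆ range e := fun x hx => ((hbt hx.1).resolve_left hx.2)
  rwa [Pi.spanSubset, image_preimage_eq_of_subset hdiff, isCompl_comm]

section CoordinateSubspaces

variable {d : ℕ}

theorem exists_finset_card_eq {i : ℕ} (hid : i ≤ d) : ∃ I : Finset (Fin d), I.card = i := by
  simpa using (Finset.univ : Finset (Fin d)).exists_subset_card_eq (by simpa using hid)

theorem mem_coordSubspace {I : Finset (Fin d)} {x : Fin d → ℝ} :
    x ∈ coordSubspace d I ↔ ∀ j ∉ I, x j = 0 :=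
  Iff.rfl

theorem coordSubspace_eq_spanSubset (I : Finset (Fin d)) :
    coordSubspace d I = Pi.spanSubset ℝ (I : Set (Fin d)) := by
  ext x
  simp [mem_coordSubspace, Pi.mem_spanSubset_iff]

theorem finrank_coordSubspace (I : Finset (Fin d)) :
    Module.finrank ℝ (coordSubspace d I) = I.card := by
  rw [coordSubspace_eq_spanSubset, Pi.dim_spanSubset, ncard_coe_finset]

theorem exists_card_eq_isCompl_coordSubspace {i : ℕ} (hid : i ≤ d)
    (W : Submodule ℝ (Fin d → ℝ)) (hW : Module.finrank ℝ W = d - i) :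
    ∃ I : Finset (Fin d), I.card = i ∧ IsCompl (coordSubspace d I) W := by
  obtain ⟨T, hT⟩ := Pi.exists_isCompl_spanSubset W
  set I := T.toFinite.toFinset
  have hI : coordSubspace d I = Pi.spanSubset ℝ T := by
    rw [coordSubspace_eq_spanSubset, Finite.coe_toFinset]
  rw [← hI] at hT
  refine ⟨I, ?_, hT⟩
  have := Submodule.finrank_add_eq_of_isCompl hT
  rw [finrank_coordSubspace, hW, Module.finrank_fin_fun] at this
  omega

theorem coordProj_mem_coordSubspace (I : Finset (Fin d)) (x : Fin d → ℝ) :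
    coordProj d I x ∈ coordSubspace d I := fun _ hj => if_neg hj

theorem coordProj_eq_self {I : Finset (Fin d)} {x : Fin d → ℝ} (hx : x ∈ coordSubspace d I) :
    coordProj d I x = x := by
  funext j
  by_cases hj : j ∈ I
  · exact if_pos hj
  · exact (if_neg hj).trans (hx j hj).symm

theorem coordProj_smul_add (I : Finset (Fin d)) (μ : ℝ) (x y : Fin d → ℝ) :
    coordProj d I (μ • x + y) = μ • coordProj d I x + coordProj d I y := by
  funext j
  by_cases hj : j ∈ I <;> simp [coordProj, hj]

theorem coordProj_mem_intLat (I : Finset (Fin d)) {z : Fin d → ℝ} (hz : z ∈ intLat d) :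
    coordProj d I z ∈ intLat d := by
  intro j
  by_cases hj : j ∈ I
  · simpa [coordProj, hj] using hz j
  · exact ⟨0, by simp [coordProj, hj]⟩

theorem coordProj_eq_of_mem_mk' {I : Finset (Fin d)} {x y : Fin d → ℝ}
    (hy : y ∈ AffineSubspace.mk' x (coordSubspace d Iᶜ)) :
    coordProj d I y = coordProj d I x := by
  funext j
  by_cases hj : j ∈ I
  · have := AffineSubspace.mem_mk'.mp hy j (by simpa using hj)
    simpa [coordProj, hj, sub_eq_zero] using this
  · simp [coordProj, hj]

theorem finrank_direction_mk'_coordSubspace_compl {i : ℕ} {I : Finset (Fin d)}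
    (hI : I.card = i) (x : Fin d → ℝ) :
    Module.finrank ℝ (AffineSubspace.mk' x (coordSubspace d Iᶜ)).direction = d - i := by
  rw [AffineSubspace.direction_mk', finrank_coordSubspace, Finset.card_compl, hI,
    Fintype.card_fin]

end CoordinateSubspaces

section CoveringSets

variable {E : Type*} [AddCommGroup E] [Module ℝ E]

def covMinSet (i : ℕ) (K L : Set E) : Set ℝ :=
  {μ : ℝ | 0 ≤ μ ∧ ∀ U : AffineSubspace ℝ E, (U : Set E).Nonempty →
    Module.finrank ℝ U.direction = Module.finrank ℝ E - i →
    ((μ • K + L) ∩ (U : Set E)).Nonempty}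

def covRadSet (K L : Set E) : Set ℝ :=
  {μ : ℝ | 0 ≤ μ ∧ μ • K + L = univ}

theorem covMin_eq_sInf (i : ℕ) (K L : Set E) : covMin i K L = sInf (covMinSet i K L) := rfl

theorem covRad_eq_sInf (K L : Set E) : covRad K L = sInf (covRadSet K L) := rfl

theorem bddBelow_covRadSet (K L : Set E) : BddBelow (covRadSet K L) :=
  ⟨0, fun _ hμ => hμ.1⟩

theorem isUpperSet_covRadSet {K : Set E} (hK : StarConvex ℝ 0 K) (L : Set E) :
    IsUpperSet (covRadSet K L) := fun _ _ hab ha =>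
  ⟨ha.1.trans hab, eq_univ_of_univ_subset <|
    ha.2 ▸ add_subset_add_right (hK.smul_set_subset_smul_set ha.1 hab)⟩

theorem mem_covRadSet_preimage_iff {P : Submodule ℝ E} {K L : Set E} {μ : ℝ} :
    μ ∈ covRadSet ((↑) ⁻¹' K : Set P) ((↑) ⁻¹' L) ↔
      0 ≤ μ ∧ (P : Set E) ⊆ μ • (K ∩ P) + (L ∩ P) := by
  have himage : ((↑) : P → E) '' (μ • ((↑) ⁻¹' K : Set P) + (↑) ⁻¹' L) =
      μ • (K ∩ P) + (L ∩ P) := by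
    rw [← P.coe_subtype, image_add, image_smul_set]
    simp [image_preimage_eq_inter_range]
  refine and_congr_right' ⟨fun h x hx => himage ▸ ⟨⟨x, hx⟩, h ▸ mem_univ _, rfl⟩,
    fun h => eq_univ_of_forall fun x => ?_⟩
  obtain ⟨y, hy, hyx⟩ := himage ▸ h x.2
  rwa [← Subtype.ext hyx]

end CoveringSets

section IntegerLattice

variable {d : ℕ} {K : Set (Fin d → ℝ)}

theorem IsLocallyAntiBlocking.coordProj_mem_smul_add (hK : IsLocallyAntiBlocking K)
    (I : Finset (Fin d)) {μ : ℝ} {y : Fin d → ℝ} (hy : y ∈ μ • K + intLat d) :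
    coordProj d I y ∈ μ • (K ∩ coordSubspace d I) + (intLat d ∩ coordSubspace d I) := by
  obtain ⟨_, ⟨k, hk, rfl⟩, z, hz, rfl⟩ := hy
  rw [coordProj_smul_add]
  exact add_mem_add (smul_mem_smul_set (hK I ▸ mem_image_of_mem _ hk))
    ⟨coordProj_mem_intLat I hz, coordProj_mem_coordSubspace I z⟩

theorem exists_smul_add_intLat_eq_univ (hK : K ∈ nhds 0) :
    ∃ μ : ℝ, 0 ≤ μ ∧ μ • K + intLat d = univ := by
  obtain ⟨r, hr, hball⟩ :=
    (NormedSpace.isVonNBounded_closedBall ℝ (Fin d → ℝ) (1 / 2) hK).exists_pos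
  refine ⟨r, hr.le, eq_univ_of_forall fun x => ?_⟩
  set z : Fin d → ℝ := fun j => (round (x j) : ℝ)
  have hxz : x - z ∈ Metric.closedBall 0 (1 / 2) := by
    rw [mem_closedBall_zero_iff, pi_norm_le_iff_of_nonneg (by norm_num)]
    exact fun j => abs_sub_round (x j)
  refine ⟨x - z, hball r (by rw [Real.norm_of_nonneg hr.le]) hxz,
    z, fun j => ⟨round (x j), rfl⟩, sub_add_cancel x z⟩

theorem IsLocallyAntiBlocking.covRadSet_nonempty (hLAB : IsLocallyAntiBlocking K)
    (hK : K ∈ nhds 0) (I : Finset (Fin d)) :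
    (covRadSet ((↑) ⁻¹' K : Set (coordSubspace d I)) ((↑) ⁻¹' intLat d)).Nonempty := by
  obtain ⟨μ, hμ, hcover⟩ := exists_smul_add_intLat_eq_univ hK
  refine ⟨μ, mem_covRadSet_preimage_iff.mpr ⟨hμ, fun x hx => ?_⟩⟩
  rw [← coordProj_eq_self hx]
  exact hLAB.coordProj_mem_smul_add I (hcover ▸ mem_univ x)

theorem IsLocallyAntiBlocking.covMinSet_subset_covRadSet (hLAB : IsLocallyAntiBlocking K)
    {i : ℕ} {I : Finset (Fin d)} (hI : I.card = i) :
    covMinSet i K (intLat d) ⊆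
      covRadSet ((↑) ⁻¹' K : Set (coordSubspace d I)) ((↑) ⁻¹' intLat d) := by
  refine fun μ hμ => mem_covRadSet_preimage_iff.mpr ⟨hμ.1, fun x hx => ?_⟩
  obtain ⟨y, hy, hyU⟩ := hμ.2 (AffineSubspace.mk' x (coordSubspace d Iᶜ))
    ⟨x, AffineSubspace.self_mem_mk' _ _⟩
    (by rw [finrank_direction_mk'_coordSubspace_compl hI, Module.finrank_fin_fun])
  rw [← coordProj_eq_self hx, ← coordProj_eq_of_mem_mk' hyU]
  exact hLAB.coordProj_mem_smul_add I hy

theorem mem_covMinSet_of_forall_mem_covRadSet {i : ℕ} (hid : i ≤ d) {μ : ℝ}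
    (hμ : ∀ I : Finset (Fin d), I.card = i →
      μ ∈ covRadSet ((↑) ⁻¹' K : Set (coordSubspace d I)) ((↑) ⁻¹' intLat d)) :
    μ ∈ covMinSet i K (intLat d) := by
  obtain ⟨I₀, hI₀⟩ := exists_finset_card_eq hid
  refine ⟨(mem_covRadSet_preimage_iff.mp (hμ I₀ hI₀)).1, fun U hU hUdim => ?_⟩
  obtain ⟨I, hI, hcompl⟩ := exists_card_eq_isCompl_coordSubspace hid U.direction
    (by rwa [Module.finrank_fin_fun] at hUdim)
  have hcover := (mem_covRadSet_preimage_iff.mp (hμ I hI)).2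
  obtain ⟨x, hxI, hxU⟩ :=
    AffineSubspace.inter_nonempty_of_sup_direction_eq_top hU hcompl.sup_eq_top
  exact ⟨x, add_subset_add (smul_set_mono inter_subset_left) inter_subset_left (hcover hxI),
    hxU⟩

theorem IsLocallyAntiBlocking.covMinSet_eq_biInter (hLAB : IsLocallyAntiBlocking K) {i : ℕ}
    (hid : i ≤ d) :
    covMinSet i K (intLat d) = ⋂ I ∈ {I : Finset (Fin d) | I.card = i},
      covRadSet ((↑) ⁻¹' K : Set (coordSubspace d I)) ((↑) ⁻¹' intLat d) :=
  Subset.antisymm (subset_iInter₂ fun _ hI => hLAB.covMinSet_subset_covRadSet hI)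
    fun _ hμ => mem_covMinSet_of_forall_mem_covRadSet hid fun I hI => mem_iInter₂.mp hμ I hI

end IntegerLattice

theorem covMin_locallyAntiBlocking_general
    (d i : ℕ) (hid : i ≤ d)
    (K : Set (Fin d → ℝ)) (hK : IsConvexBody K)
    (hproper : (0 : Fin d → ℝ) ∈ interior K)
    (hLAB : IsLocallyAntiBlocking K) :
    covMin i K (intLat d) =
      sSup {x : ℝ | ∃ I : Finset (Fin d), I.card = i ∧
        x = covRad (Subtype.val ⁻¹' K : Set (coordSubspace d I))
              (Subtype.val ⁻¹' intLat d : Set (coordSubspace d I))} := by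
  have hK0 : K ∈ nhds 0 := mem_interior_iff_mem_nhds.mp hproper
  have hstar : StarConvex ℝ 0 K := hK.1.starConvex (mem_of_mem_nhds hK0)
  rw [covMin_eq_sInf, hLAB.covMinSet_eq_biInter hid]
  refine (csInf_biInter_eq_csSup_image (S := {I : Finset (Fin d) | I.card = i}) (toFinite _)
    (exists_finset_card_eq hid) (fun I _ => ?_) (fun I _ => hLAB.covRadSet_nonempty hK0 I)
    (fun I _ => bddBelow_covRadSet _ _)).trans ?_
  · exact isUpperSet_covRadSet (hstar.linear_preimage (coordSubspace d I).subtype) _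
  · congr 1
    ext x
    simp [covRad_eq_sInf, eq_comm]

/-- **Corollary (locally anti-blocking bodies).** For a proper locally anti-blocking body `K`,
`μ_i(K) = max { μ(K ∩ L_I) : |I| = i }`, the covering radii being computed in `L_I` with
respect to the lattice `ℤ^d ∩ L_I`. -/
theorem covMin_locallyAntiBlocking
    (d i : ℕ) (hi : 1 ≤ i) (hid : i ≤ d)
    (K : Set (Fin d → ℝ)) (hK : IsConvexBody K)
    (hproper : (0 : Fin d → ℝ) ∈ interior K)
    (hLAB : IsLocallyAntiBlocking K) :
    covMin i K (intLat d) =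
      sSup {x : ℝ | ∃ I : Finset (Fin d), I.card = i ∧
        x = covRad (Subtype.val ⁻¹' K : Set (coordSubspace d I))
              (Subtype.val ⁻¹' intLat d : Set (coordSubspace d I))} :=
  covMin_locallyAntiBlocking_general d i hid K hK hproper hLAB
end

section
/- For every d ∈ ℕ and every i ∈ {1,…,d}, the i-th covering minimum of the standard unimodular simplex conv(0, e_1, …, e_d) ⊆ ℝ^d with respect to ℤ^d equals i. -/
open scoped Pointwise

private lemma span_single_top (d : ℕ) :
    Submodule.span ℝ (Set.range fun j : Fin d => Pi.single j (1:ℝ)) = ⊤ := by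
  have h : (fun j : Fin d => Pi.single j (1:ℝ)) = ⇑(Pi.basisFun ℝ (Fin d)) := by
    funext j; simp
  rw [h]
  exact (Pi.basisFun ℝ (Fin d)).span_eq

private lemma exists_sup_span (d : ℕ) :
    ∀ (k : ℕ) (V : Submodule ℝ (Fin d → ℝ)), d ≤ Module.finrank ℝ V + k →
    ∃ S : Finset (Fin d), S.card ≤ k ∧
      V ⊔ Submodule.span ℝ ((fun j => Pi.single j (1:ℝ)) '' ↑S) = ⊤ := by
  intro k
  induction k with
  | zero =>
      intro V hV
      refine ⟨∅, le_rfl, ?_⟩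
      have hV' : V = ⊤ := by
        apply Submodule.eq_top_of_finrank_eq
        have h1 : Module.finrank ℝ V ≤ Module.finrank ℝ (Fin d → ℝ) := V.finrank_le
        have h2 : Module.finrank ℝ (Fin d → ℝ) = d := by simp [Module.finrank_pi]
        omega
      simp [hV']
  | succ k ih =>
      intro V hV
      by_cases hV' : V = ⊤
      · exact ⟨∅, Nat.zero_le _, by simp [hV']⟩
      · obtain ⟨j, hj⟩ : ∃ j : Fin d, Pi.single j (1:ℝ) ∉ V := by
          by_contra h
          push_neg at h
          exact hV' (top_le_iff.1 (by
            rw [← span_single_top d]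
            exact Submodule.span_le.2 (Set.range_subset_iff.2 h)))
        set V' := V ⊔ Submodule.span ℝ {Pi.single j (1:ℝ)} with hV'def
        have hmem : Pi.single j (1:ℝ) ∈ V' :=
          Submodule.mem_sup_right (Submodule.mem_span_singleton_self _)
        have hlt : V < V' := lt_of_le_of_ne le_sup_left (by
          intro h; exact hj (by rw [h]; exact hmem))
        have hfr : Module.finrank ℝ V < Module.finrank ℝ V' :=
          Submodule.finrank_lt_finrank_of_lt hlt
        obtain ⟨S', hS'c, hS't⟩ := ih V' (by omega)
        refine ⟨insert j S', le_trans (Finset.card_insert_le _ _) (by omega), ?_⟩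
        rw [Finset.coe_insert, Set.image_insert_eq, Submodule.span_insert, ← sup_assoc]
        exact hS't

private lemma card_lt_subtype (d i : ℕ) (hid : i ≤ d) :
    Fintype.card {j : Fin d // (j : ℕ) < i} = i := by
  have e : {j : Fin d // (j : ℕ) < i} ≃ Fin i :=
    { toFun := fun j => ⟨(j.1 : ℕ), j.2⟩
      invFun := fun k => ⟨⟨(k : ℕ), lt_of_lt_of_le k.2 hid⟩, k.2⟩
      left_inv := fun j => by ext; rfl
      right_inv := fun k => rfl }
  rw [Fintype.card_congr e, Fintype.card_fin]

private lemma mem_hull (d : ℕ) (y : Fin d → ℝ) (h0 : ∀ j, 0 ≤ y j) (h1 : ∑ j, y j ≤ 1) :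
    y ∈ convexHull ℝ (insert (0 : Fin d → ℝ) (Set.range fun j : Fin d => Pi.single j (1:ℝ))) := by
  classical
  set s := insert (0 : Fin d → ℝ) (Set.range fun j : Fin d => Pi.single j (1:ℝ)) with hs
  have hc : Convex ℝ (convexHull ℝ s) := convex_convexHull ℝ s
  have key := hc.sum_mem (t := (Finset.univ : Finset (Option (Fin d))))
    (w := fun o => Option.elim o (1 - ∑ j, y j) y)
    (z := fun o => Option.elim o 0 (fun j => Pi.single j (1:ℝ)))
    (fun o _ => by
      cases o with
      | none => simpa using by linarith
      | some j => exact h0 j)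
    (by
      rw [Fintype.sum_option]
      simp)
    (fun o _ => by
      cases o with
      | none => exact subset_convexHull ℝ s (Set.mem_insert _ _)
      | some j => exact subset_convexHull ℝ s (Set.mem_insert_of_mem _ ⟨j, rfl⟩))
  have heq : (∑ o : Option (Fin d),
      (Option.elim o (1 - ∑ j, y j) y) • (Option.elim o 0 (fun j => Pi.single j (1:ℝ)) : Fin d → ℝ)) = y := by
    rw [Fintype.sum_option]
    simp only [Option.elim]
    rw [smul_zero, zero_add]
    funext m
    simp [Finset.sum_apply, Pi.single_apply]
  rwa [heq] at key

private lemma hull_subset (d : ℕ) :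
    convexHull ℝ (insert (0 : Fin d → ℝ) (Set.range fun j : Fin d => Pi.single j (1:ℝ))) ⊆
      {y : Fin d → ℝ | (∀ j, 0 ≤ y j) ∧ ∑ j, y j ≤ 1} := by
  apply convexHull_min
  · rintro x hx
    rcases Set.mem_insert_iff.1 hx with rfl | ⟨j, rfl⟩
    · constructor
      · intro j; simp
      · simp
    · constructor
      · intro m; by_cases h : m = j <;> simp [Pi.single_apply, h]
      · simp [Pi.single_apply]
  · rintro x hx y hy a b ha hb hab
    constructor
    · intro j
      have := hx.1 j
      have := hy.1 j
      have : (a • x + b • y) j = a * x j + b * y j := by simp [mul_comm]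
      rw [this]
      nlinarith [hx.1 j, hy.1 j]
    · have : ∑ j, (a • x + b • y) j = a * (∑ j, x j) + b * (∑ j, y j) := by
        simp [Finset.sum_add_distrib, Finset.mul_sum, mul_comm]
      rw [this]
      nlinarith [hx.2, hy.2]

/-- The `i`-th covering minimum of the standard unimodular simplex
`conv(0, e_1, …, e_d) ⊆ ℝ^d` equals `i`. -/
theorem covMin_unimodularSimplex (d i : ℕ) (hi : 1 ≤ i) (hid : i ≤ d) :
    covMin i
        (convexHull ℝ (insert (0 : Fin d → ℝ) (Set.range fun j : Fin d => Pi.single j (1 : ℝ))))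
        (intLat d) = (i : ℝ) := by
  classical
  set K := convexHull ℝ (insert (0 : Fin d → ℝ) (Set.range fun j : Fin d => Pi.single j (1 : ℝ)))
    with hK
  set A := {μ : ℝ | 0 ≤ μ ∧ ∀ U : AffineSubspace ℝ (Fin d → ℝ), (U : Set (Fin d → ℝ)).Nonempty →
    Module.finrank ℝ U.direction = Module.finrank ℝ (Fin d → ℝ) - i →
    ((μ • K + intLat d) ∩ (U : Set (Fin d → ℝ))).Nonempty} with hA
  have hE : Module.finrank ℝ (Fin d → ℝ) = d := by simp [Module.finrank_pi]
  have hi0 : (0:ℝ) < i := by exact_mod_cast hi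
  -- membership of i
  have hmem : (i : ℝ) ∈ A := by
    refine ⟨by positivity, fun U hUne hUdim => ?_⟩
    obtain ⟨p, hp⟩ := hUne
    rw [hE] at hUdim
    obtain ⟨S, hScard, hStop⟩ := exists_sup_span d i U.direction (by omega)
    set π := LinearMap.funLeft ℝ ℝ ((↑) : {j : Fin d // j ∉ S} → Fin d) with hπ
    have hπsurj : Function.Surjective π :=
      LinearMap.funLeft_surjective_of_injective ℝ ℝ _ Subtype.val_injective
    have hmap : Submodule.map π U.direction = ⊤ := by
      have h1 : Submodule.map π (U.direction ⊔
          Submodule.span ℝ ((fun j => Pi.single j (1:ℝ)) '' ↑S)) = ⊤ := by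
        rw [hStop, Submodule.map_top, LinearMap.range_eq_top.2 hπsurj]
      rw [Submodule.map_sup] at h1
      have h2 : Submodule.map π (Submodule.span ℝ ((fun j => Pi.single j (1:ℝ)) '' ↑S)) = ⊥ := by
        rw [Submodule.map_span]
        apply le_bot_iff.1
        apply Submodule.span_le.2
        rintro x ⟨y, ⟨j', hj'S, rfl⟩, rfl⟩
        have : π (Pi.single j' (1:ℝ)) = 0 := by
          funext m
          have hne : (m : Fin d) ≠ j' := by
            intro h
            exact m.2 (h ▸ hj'S)
          simp [hπ, LinearMap.funLeft_apply, Pi.single_apply, hne]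
        simp [this]
      rw [h2, sup_bot_eq] at h1
      exact h1
    obtain ⟨v, hvV, hv⟩ : ∃ v ∈ U.direction, π v = - π p := by
      have : - π p ∈ Submodule.map π U.direction := by rw [hmap]; trivial
      exact Submodule.mem_map.1 this
    set x := v + p with hxdef
    have hxU : x ∈ U := by
      have := AffineSubspace.vadd_mem_of_mem_direction hvV hp
      simpa [vadd_eq_add] using this
    have hx0 : ∀ j, j ∉ S → x j = 0 := by
      intro j hj
      have h1 : π x = 0 := by rw [hxdef, map_add, hv, neg_add_cancel]
      have := congrFun h1 ⟨j, hj⟩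
      simpa [hπ, LinearMap.funLeft_apply] using this
    have hiR : (i:ℝ) ≠ 0 := ne_of_gt hi0
    have hsum : ∑ j, Int.fract (x j) ≤ (i:ℝ) := by
      have h1 : ∑ j, Int.fract (x j) = ∑ j ∈ S, Int.fract (x j) := by
        symm
        apply Finset.sum_subset S.subset_univ
        intro j _ hj
        rw [hx0 j hj]
        simp
      rw [h1]
      calc ∑ j ∈ S, Int.fract (x j) ≤ S.card • (1:ℝ) :=
            Finset.sum_le_card_nsmul S _ 1 (fun j _ => (Int.fract_lt_one _).le)
        _ = (S.card : ℝ) := by simp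
        _ ≤ (i:ℝ) := by exact_mod_cast hScard
    refine ⟨x, ?_, hxU⟩
    rw [Set.mem_add]
    refine ⟨(i:ℝ) • ((i:ℝ)⁻¹ • fun j => Int.fract (x j)), ?_,
      (fun j => (⌊x j⌋ : ℝ)), fun j => ⟨⌊x j⌋, rfl⟩, ?_⟩
    · apply Set.smul_mem_smul_set
      apply mem_hull d
      · intro j
        have := Int.fract_nonneg (x j)
        have hinv : (0:ℝ) ≤ (i:ℝ)⁻¹ := by positivity
        simpa using mul_nonneg hinv this
      · have : ∑ j, ((i:ℝ)⁻¹ • fun j => Int.fract (x j)) j = (i:ℝ)⁻¹ * ∑ j, Int.fract (x j) := by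
          simp [Finset.mul_sum]
        rw [this]
        rw [inv_mul_le_one₀ hi0]  -- might not exist; fallback below
        exact hsum
    · rw [smul_inv_smul₀ hiR]
      funext j
      simp only [Pi.add_apply]
      exact Int.fract_add_floor (x j)
  -- lower bound
  have hlb : ∀ μ ∈ A, (i:ℝ) ≤ μ := by
    rintro μ ⟨hμ0, hcov⟩
    by_contra hlt
    push_neg at hlt
    set c : ℝ := (μ / i + 1) / 2 with hc
    have hdiv : μ / i < 1 := (div_lt_one hi0).2 hlt
    have hdiv0 : 0 ≤ μ / i := by positivity
    have hc1 : c < 1 := by rw [hc]; linarith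
    have hc0 : 0 ≤ c := by rw [hc]; linarith
    have hμc : μ < i * c := by
      have : μ / i < c := by rw [hc]; linarith
      calc μ = i * (μ / i) := by field_simp
        _ < i * c := by exact mul_lt_mul_of_pos_left this hi0
    set π := LinearMap.funLeft ℝ ℝ ((↑) : {j : Fin d // (j : ℕ) < i} → Fin d) with hπ
    set p₀ : Fin d → ℝ := fun j => if (j : ℕ) < i then c else 0 with hp₀
    set U := AffineSubspace.mk' p₀ (LinearMap.ker π) with hU
    have hne : (U : Set (Fin d → ℝ)).Nonempty := ⟨p₀, AffineSubspace.self_mem_mk' _ _⟩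
    have hπsurj : Function.Surjective π :=
      LinearMap.funLeft_surjective_of_injective ℝ ℝ _ Subtype.val_injective
    have hdim : Module.finrank ℝ U.direction = Module.finrank ℝ (Fin d → ℝ) - i := by
      rw [hU, AffineSubspace.direction_mk']
      have h1 := LinearMap.finrank_range_add_finrank_ker π
      rw [LinearMap.range_eq_top.2 hπsurj] at h1
      have h2 : Module.finrank ℝ (⊤ : Submodule ℝ ({j : Fin d // (j : ℕ) < i} → ℝ)) = i := by
        rw [finrank_top, Module.finrank_pi, card_lt_subtype d i hid]
      rw [h2] at h1
      rw [hE]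
      omega
    obtain ⟨x, hxmem, hxU⟩ := hcov U hne hdim
    have hxc : ∀ j : Fin d, (j : ℕ) < i → x j = c := by
      have hd := AffineSubspace.mem_mk'.1 hxU
      intro j hj
      have h1 := congrFun (LinearMap.mem_ker.1 hd) ⟨j, hj⟩
      have : (x -ᵥ p₀) j = 0 := h1
      rw [vsub_eq_sub] at this
      have : x j - p₀ j = 0 := this
      rw [hp₀] at this
      simp only [hj, if_true] at this
      linarith
    obtain ⟨a, ha, z, hz, hxeq⟩ := Set.mem_add.1 hxmem
    obtain ⟨k, hk, rfl⟩ := ha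
    have hkprop := hull_subset d hk
    obtain ⟨hk0, hk1⟩ := hkprop
    -- for each j with j < i, c ≤ μ * k j
    have hkey : ∀ j : Fin d, (j : ℕ) < i → c ≤ μ * k j := by
      intro j hj
      obtain ⟨m, hm⟩ := hz j
      have heq : μ * k j + (m:ℝ) = c := by
        have := congrFun hxeq j
        simp only [Pi.add_apply, Pi.smul_apply, smul_eq_mul] at this
        rw [hm] at this
        rw [this]
        exact hxc j hj
      have hm1 : (m:ℝ) < 1 := by nlinarith [mul_nonneg hμ0 (hk0 j)]
      have hm0 : m ≤ 0 := by
        have : m < 1 := by exact_mod_cast hm1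
        omega
      have : (m:ℝ) ≤ 0 := by exact_mod_cast hm0
      linarith
    set F := Finset.univ.filter (fun j : Fin d => (j : ℕ) < i) with hF
    have hFcard : F.card = i := by
      rw [hF, ← Fintype.card_subtype]
      exact card_lt_subtype d i hid
    have h1 : (i:ℝ) * c ≤ ∑ j ∈ F, μ * k j := by
      have : ∑ j ∈ F, c ≤ ∑ j ∈ F, μ * k j := by
        apply Finset.sum_le_sum
        intro j hj
        exact hkey j (Finset.mem_filter.1 hj).2
      calc (i:ℝ) * c = F.card * c := by rw [hFcard]
        _ = ∑ j ∈ F, c := by rw [Finset.sum_const, nsmul_eq_mul]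
        _ ≤ _ := this
    have h2 : ∑ j ∈ F, μ * k j ≤ ∑ j, μ * k j := by
      apply Finset.sum_le_sum_of_subset_of_nonneg (Finset.filter_subset _ _)
      intro j _ _
      exact mul_nonneg hμ0 (hk0 j)
    have h3 : ∑ j, μ * k j ≤ μ := by
      rw [← Finset.mul_sum]
      nlinarith
    linarith
  rw [covMin]
  exact le_antisymm (csInf_le ⟨(i:ℝ), fun μ hμ => hlb μ hμ⟩ hmem) (le_csInf ⟨(i:ℝ), hmem⟩ hlb)
end

section
/- For every d ∈ ℕ and every i ∈ {1,…,d}, the i-th covering minimum of the standard crosspolytope conv(±e_1, …, ±e_d) ⊆ ℝ^d with respect to ℤ^d equals i/2. -/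
/-!
The crosspolytope is the unit ball of the ℓ¹ norm, so `μ` works for an affine subspace `U`
exactly when some point of `U` is within ℓ¹ distance `μ` of `ℤ^d`.

Upper bound: if `U` has codimension `i`, then its direction projects onto the coordinates
outside some set `J` of at most `i` coordinates. Hence `U` contains a point that is an integer
outside `J`, and rounding its `J`-coordinates costs at most `1/2` each.

Lower bound: on the subspace where `i` chosen coordinates equal `1/2`, every point is at ℓ¹
distance at least `i/2` from `ℤ^d`.
-/

open scoped Pointwise

open Module Set

theorem convex_setOf_sum_abs_le {ι : Type*} [Fintype ι] (r : ℝ) :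
    Convex ℝ {x : ι → ℝ | ∑ j, |x j| ≤ r} := by
  intro x hx y hy a b ha hb hab
  calc ∑ j, |a * x j + b * y j| ≤ ∑ j, (a * |x j| + b * |y j|) := by
        gcongr with j
        exact (abs_add_le _ _).trans_eq
          (by rw [abs_mul, abs_mul, abs_of_nonneg ha, abs_of_nonneg hb])
    _ = a * ∑ j, |x j| + b * ∑ j, |y j| := by
        rw [Finset.sum_add_distrib, Finset.mul_sum, Finset.mul_sum]
    _ ≤ a * r + b * r := by gcongr <;> assumption
    _ = r := by rw [← add_mul, hab, one_mul]

section Crosspolytope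

variable (ι : Type*) [DecidableEq ι]

def crosspolytope : Set (ι → ℝ) :=
  convexHull ℝ
    ((range fun j : ι => Pi.single j (1 : ℝ)) ∪ (range fun j : ι => Pi.single j (-1 : ℝ)))

variable {ι}

theorem convex_crosspolytope : Convex ℝ (crosspolytope ι) := convex_convexHull ℝ _

theorem single_one_mem_crosspolytope (j : ι) : Pi.single j 1 ∈ crosspolytope ι :=
  subset_convexHull ℝ _ (Or.inl ⟨j, rfl⟩)

theorem single_neg_one_mem_crosspolytope (j : ι) : Pi.single j (-1) ∈ crosspolytope ι :=
  subset_convexHull ℝ _ (Or.inr ⟨j, rfl⟩)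

theorem zero_mem_crosspolytope [Nonempty ι] : (0 : ι → ℝ) ∈ crosspolytope ι := by
  obtain ⟨j⟩ := ‹Nonempty ι›
  have h := convex_crosspolytope (single_one_mem_crosspolytope j)
    (single_neg_one_mem_crosspolytope j) (by norm_num : (0 : ℝ) ≤ 1 / 2)
    (by norm_num : (0 : ℝ) ≤ 1 / 2) (add_halves 1)
  rwa [Pi.single_neg, smul_neg, add_neg_cancel] at h

theorem crosspolytope_eq [Fintype ι] [Nonempty ι] : crosspolytope ι = {x | ∑ j, |x j| ≤ 1} := by
  refine (convexHull_min ?_ (convex_setOf_sum_abs_le 1)).antisymm fun x (hx : ∑ j, |x j| ≤ 1) => ?_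
  · rintro _ (⟨j, rfl⟩ | ⟨j, rfl⟩) <;> simp [Pi.single_apply, apply_ite]
  have hsign : ∀ j, (SignType.sign (x j) : ℝ) • Pi.single j (1 : ℝ) ∈ crosspolytope ι := by
    intro j
    rcases SignType.sign (x j) with _ | _ | _
    · simpa using zero_mem_crosspolytope
    · simpa [← Pi.single_neg] using single_neg_one_mem_crosspolytope j
    · simpa using single_one_mem_crosspolytope j
  -- `x` is the convex combination of the `sign (x j) • e_j` with weights `|x j|` and of `0`
  have h := convex_crosspolytope.sum_mem (t := Finset.univ)
    (w := fun o : Option ι => o.elim (1 - ∑ j, |x j|) fun j => |x j|)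
    (z := fun o => o.elim 0 fun j => (SignType.sign (x j) : ℝ) • Pi.single j (1 : ℝ))
    (by rintro (_ | j) - <;> simp [sub_nonneg.2 hx]) (by simp [Fintype.sum_option])
    (by rintro (_ | j) - <;> simp [zero_mem_crosspolytope, hsign])
  change x ∈ crosspolytope ι
  convert h using 1
  simpa [Fintype.sum_option, smul_smul] using ((Pi.basisFun ℝ ι).sum_repr x).symm

theorem smul_crosspolytope [Fintype ι] [Nonempty ι] {μ : ℝ} (hμ : 0 ≤ μ) :
    μ • crosspolytope ι = {y | ∑ j, |y j| ≤ μ} := by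
  rcases hμ.eq_or_lt with rfl | hμ
  · ext y
    have h0 : (0 : ℝ) ≤ ∑ j, |y j| := Finset.sum_nonneg fun j _ => abs_nonneg (y j)
    rw [zero_smul_set ⟨0, zero_mem_crosspolytope⟩, mem_zero, mem_ofPred, h0.ge_iff_eq',
      Fintype.sum_eq_zero_iff_of_nonneg fun j => abs_nonneg (y j)]
    simp [funext_iff]
  · ext y
    simp [mem_smul_set_iff_inv_smul_mem₀ hμ.ne', crosspolytope_eq, abs_mul, ← Finset.mul_sum,
      inv_mul_le_iff₀ hμ, abs_of_pos hμ]

theorem mem_smul_crosspolytope_add_iff [Fintype ι] [Nonempty ι] {μ : ℝ} (hμ : 0 ≤ μ)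
    {L : Set (ι → ℝ)} {x : ι → ℝ} :
    x ∈ μ • crosspolytope ι + L ↔ ∃ z ∈ L, ∑ j, |x j - z j| ≤ μ := by
  simp_rw [smul_crosspolytope hμ, mem_add]
  constructor
  · rintro ⟨y, hy, z, hz, rfl⟩
    exact ⟨z, hz, by simpa using hy⟩
  · rintro ⟨z, hz, hxz⟩
    exact ⟨x - z, hxz, z, hz, sub_add_cancel x z⟩

end Crosspolytope

theorem Submodule.exists_finset_card_le_forall_exists_mem_eq_of_notMem {K ι : Type*} [Field K]
    [Fintype ι] (V : Submodule K (ι → K)) :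
    ∃ J : Finset ι, J.card ≤ Fintype.card ι - finrank K V ∧
      ∀ u : ι → K, ∃ v ∈ V, ∀ j ∉ J, v j = u j := by
  classical
  set e : ι → (ι → K) ⧸ V := fun j => V.mkQ (Pi.single j 1)
  obtain ⟨b, -, -, he, hb⟩ :=
    exists_linearIndepOn_extension (v := e) (linearIndepOn_empty K e) (empty_subset univ)
  refine ⟨b.toFinset, ?_, fun u => ?_⟩
  · calc b.toFinset.card = Fintype.card b := toFinset_card b
      _ ≤ finrank K ((ι → K) ⧸ V) := LinearIndependent.fintype_card_le_finrank hb
      _ = Fintype.card ι - finrank K V := by rw [V.finrank_quotient, finrank_fintype_fun_eq_card]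
  have he_span : span K (range e) = ⊤ := by
    rw [show range e = V.mkQ '' range (Pi.basisFun K ι) by
        simp [e, ← range_comp, Function.comp_def],
      span_image, (Pi.basisFun K ι).span_eq, map_top, range_mkQ]
  set W := pi (↑b.toFinset)ᶜ fun _ : ι => (⊥ : Submodule K K)
  have hVW : V ⊔ W = ⊤ := by
    rw [← map_mkQ_eq_top, eq_top_iff, ← he_span, span_le, ← image_univ]
    refine he.trans (span_le.2 ?_)
    rintro _ ⟨j, hj, rfl⟩
    refine mem_map_of_mem (mem_pi.2 fun k hk => ?_)
    have hkj : k ≠ j := by rintro rfl; simp_all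
    exact (mem_bot K).2 (Pi.single_eq_of_ne hkj 1)
  obtain ⟨v, hv, w, hw, rfl⟩ := mem_sup.1 (hVW ▸ mem_top : u ∈ V ⊔ W)
  refine ⟨v, hv, fun j hj => ?_⟩
  have hwj : w j = 0 := (mem_bot K).1 (mem_pi.1 hw j (by simpa using hj))
  simp [hwj]

section Lattice

variable {ι : Type*} [Fintype ι]

theorem AffineSubspace.exists_mem_sum_abs_sub_round_le {i : ℕ} (U : AffineSubspace ℝ (ι → ℝ))
    (hU : (U : Set (ι → ℝ)).Nonempty) (hdim : Fintype.card ι ≤ finrank ℝ U.direction + i) :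
    ∃ x ∈ U, ∑ j, |x j - round (x j)| ≤ i / 2 := by
  obtain ⟨p, hp⟩ := hU
  obtain ⟨J, hJ, hV⟩ := U.direction.exists_finset_card_le_forall_exists_mem_eq_of_notMem
  -- move `p` inside `U` so that every coordinate outside `J` becomes an integer
  obtain ⟨v, hv, hvp⟩ := hV fun j => round (p j) - p j
  refine ⟨v +ᵥ p, AffineSubspace.vadd_mem_of_mem_direction hv hp, ?_⟩
  have hJi : (J.card : ℝ) ≤ i := by exact_mod_cast (by omega : J.card ≤ i)
  calc ∑ j, |(v +ᵥ p) j - round ((v +ᵥ p) j)|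
      = ∑ j ∈ J, |(v +ᵥ p) j - round ((v +ᵥ p) j)| := by
        refine (Finset.sum_subset J.subset_univ fun j _ hj => ?_).symm
        simp [hvp j hj]
    _ ≤ ∑ _j ∈ J, (1 / 2 : ℝ) := Finset.sum_le_sum fun j _ => abs_sub_round _
    _ ≤ i / 2 := by simp only [Finset.sum_const, nsmul_eq_mul]; linarith

theorem one_half_le_abs_one_half_sub_intCast (m : ℤ) : (1 / 2 : ℝ) ≤ |1 / 2 - (m : ℝ)| := by
  rcases le_or_gt m 0 with hm | hm
  · have : (m : ℝ) ≤ 0 := by exact_mod_cast hm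
    rw [abs_of_nonneg (by linarith)]
    linarith
  · have : (1 : ℝ) ≤ m := by exact_mod_cast hm
    rw [abs_of_nonpos (by linarith)]
    linarith

theorem exists_affineSubspace_forall_le_sum_abs_sub {i : ℕ} (hi : i ≤ Fintype.card ι) :
    ∃ U : AffineSubspace ℝ (ι → ℝ), (U : Set (ι → ℝ)).Nonempty ∧
      finrank ℝ U.direction = Fintype.card ι - i ∧
      ∀ x ∈ U, ∀ z : ι → ℝ, (∀ j, ∃ m : ℤ, z j = m) → (i : ℝ) / 2 ≤ ∑ j, |x j - z j| := by
  obtain ⟨J, -, hJ⟩ := Finset.exists_subset_card_eq (s := Finset.univ) (n := i) hi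
  set res : (ι → ℝ) →ₗ[ℝ] (J → ℝ) := LinearMap.funLeft ℝ ℝ Subtype.val
  set U := AffineSubspace.mk' (fun _ => (1 / 2 : ℝ)) (LinearMap.ker res)
  have hU : ∀ x, x ∈ U ↔ ∀ j ∈ J, x j = 1 / 2 := by
    intro x
    simp [U, AffineSubspace.mem_mk', res, funext_iff, sub_eq_zero]
  refine ⟨U, ⟨_, AffineSubspace.self_mem_mk' _ _⟩, ?_, fun x hx z hz => ?_⟩
  · have hres : LinearMap.range res = ⊤ :=
      LinearMap.range_eq_top.2 <|
        LinearMap.funLeft_surjective_of_injective _ _ _ Subtype.val_injective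
    have := res.finrank_range_add_finrank_ker
    rw [hres, finrank_top, finrank_fintype_fun_eq_card, finrank_fintype_fun_eq_card,
      Fintype.card_coe, hJ] at this
    rw [AffineSubspace.direction_mk']
    omega
  · calc (i : ℝ) / 2 = ∑ _j ∈ J, (1 / 2 : ℝ) := by
          rw [Finset.sum_const, hJ, nsmul_eq_mul, mul_one_div]
      _ ≤ ∑ j ∈ J, |x j - z j| := Finset.sum_le_sum fun j hj => by
          obtain ⟨m, hm⟩ := hz j
          rw [(hU x).1 hx j hj, hm]
          exact one_half_le_abs_one_half_sub_intCast m
      _ ≤ ∑ j, |x j - z j| :=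
          Finset.sum_le_sum_of_subset_of_nonneg J.subset_univ fun j _ _ => abs_nonneg _

end Lattice

/-- The `i`-th covering minimum of the standard crosspolytope
`conv(±e_1, …, ±e_d) ⊆ ℝ^d` equals `i/2`. -/
theorem covMin_crosspolytope (d i : ℕ) (hi : 1 ≤ i) (hid : i ≤ d) :
    covMin i
        (convexHull ℝ ((Set.range fun j : Fin d => Pi.single j (1 : ℝ)) ∪
          (Set.range fun j : Fin d => Pi.single j (-1 : ℝ))))
        (intLat d) = (i : ℝ) / 2 := by
  have : Nonempty (Fin d) := ⟨⟨0, by omega⟩⟩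
  have hfin : finrank ℝ (Fin d → ℝ) = d := finrank_fin_fun ℝ
  refine IsLeast.csInf_eq ⟨⟨by positivity, fun U hU hdim => ?_⟩, fun μ ⟨hμ, hcov⟩ => ?_⟩
  · obtain ⟨x, hxU, hx⟩ :=
      U.exists_mem_sum_abs_sub_round_le (i := i) hU (by rw [Fintype.card_fin, hdim, hfin]; omega)
    exact ⟨x, (mem_smul_crosspolytope_add_iff (by positivity)).2
      ⟨fun j => round (x j), fun j => ⟨_, rfl⟩, hx⟩, hxU⟩
  · obtain ⟨U, hU, hdim, hfar⟩ :=
      exists_affineSubspace_forall_le_sum_abs_sub (ι := Fin d) (i := i) (by simpa using hid)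
    obtain ⟨x, hx, hxU⟩ := hcov U hU (by simpa [hfin] using hdim)
    obtain ⟨z, hz, hxz⟩ := (mem_smul_crosspolytope_add_iff hμ).1 hx
    exact (hfar x hxU z hz).trans hxz
end

section
/- Let ω ∈ ℝ^{d+1}_{>0} with ω_0 ≤ ω_1 ≤ … ≤ ω_d, and let i < d. Then μ_i(S(ω)) ≤ [ (1/ω_0 + Σ_{k=i+1}^{d} 1/ω_k)·(Σ_{j=1}^{i} 1/ω_j) + Σ_{1 ≤ s < t ≤ i} 1/(ω_s ω_t) ] / ( Σ_{k=0}^{d} 1/ω_k ). -/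
/-!
A `(d - i)`-dimensional affine subspace `U` meets the span of some `i` coordinate vectors
`e_k, k ∈ I`, say in `c`. With `u_k = 1/ω_k` and `W = ∑_{k=0}^d u_k`, a point `y` lies in
`μ S(ω)` as soon as `∑_k y_k u_k ≤ μ` and `∑_j y_j u_j - μ ≤ W y_k` for every `k`. Round `c`
to a lattice point `z`, up at the coordinates in `I` whose fractional part is at least `t` and
down elsewhere. If `μ W = W σ - ∑_{a ≤ b in I} u_a u_b` with `σ = ∑_I u`, then `c - z` lies in
`μ S(ω)` for `t = 1` or for some `t = fract c_a`: averaging the failures over `a` with weights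
`u_a` is contradictory. As `ω` is monotone, this bound is largest for `I = {1, …, i}`, where it
is the claimed one.
-/

open scoped Pointwise

/-- The weighted terminal simplex `S(ω) = conv(-ω₀ 𝟙_d, ω₁ e_1, …, ω_d e_d) ⊆ ℝ^d`,
for `ω = (ω₀, …, ω_d)`. -/
def wSimplex (d : ℕ) (ω : Fin (d + 1) → ℝ) : Set (Fin d → ℝ) :=
  convexHull ℝ (insert (fun _ => -ω 0) (Set.range fun j : Fin d => Pi.single j (ω j.succ)))

open Finset

lemma sq_sum_eq_sum_sq_add_two_mul_sum_lt {ι : Type*} [LinearOrder ι] (s : Finset ι)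
    (u : ι → ℝ) :
    (∑ a ∈ s, u a) ^ 2 = ∑ a ∈ s, u a ^ 2 + 2 * ∑ a ∈ s, ∑ b ∈ s with a < b, u a * u b := by
  have htri : ∀ a b, u a * u b = (if a = b then u a * u b else 0)
      + (if a < b then u a * u b else 0) + (if b < a then u a * u b else 0) := by
    intro a b
    rcases lt_trichotomy a b with h | rfl | h
    · simp [h, h.ne, h.not_gt]
    · simp
    · simp [h, h.ne', h.not_gt]
  have hdiag : ∑ a ∈ s, ∑ b ∈ s, (if a = b then u a * u b else 0) = ∑ a ∈ s, u a ^ 2 :=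
    sum_congr rfl fun a ha => by rw [sum_ite_eq, if_pos ha, sq]
  have hswap : ∑ a ∈ s, ∑ b ∈ s, (if b < a then u a * u b else 0)
      = ∑ a ∈ s, ∑ b ∈ s, (if a < b then u a * u b else 0) := by
    rw [sum_comm]
    simp only [mul_comm]
  rw [sq, sum_mul_sum, sum_congr rfl fun a _ => sum_congr rfl fun b _ => htri a b]
  simp only [sum_add_distrib, hswap, hdiag, sum_filter]
  ring

lemma sq_sum_add_sum_sq_le_two_mul_sum_filter_le {ι α : Type*} [LinearOrder α] (s : Finset ι)
    {u : ι → ℝ} (hu : ∀ a ∈ s, 0 ≤ u a) (ρ : ι → α) :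
    (∑ a ∈ s, u a) ^ 2 + ∑ a ∈ s, u a ^ 2 ≤ 2 * ∑ a ∈ s, u a * ∑ b ∈ s with ρ a ≤ ρ b, u b := by
  classical
  have hsq : (∑ a ∈ s, u a) ^ 2 + ∑ a ∈ s, u a ^ 2
      = ∑ a ∈ s, ∑ b ∈ s, (u a * u b + if a = b then u a * u b else 0) := by
    simp only [sum_add_distrib, sum_ite_eq, sq, sum_mul_sum]
    congr 1
    exact sum_congr rfl fun a ha => by simp [ha]
  have hD : ∑ a ∈ s, u a * ∑ b ∈ s with ρ a ≤ ρ b, u b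
      = ∑ a ∈ s, ∑ b ∈ s, if ρ a ≤ ρ b then u a * u b else 0 := by
    simp only [mul_sum, sum_filter, mul_ite, mul_zero]
  have hD' : ∑ a ∈ s, u a * ∑ b ∈ s with ρ a ≤ ρ b, u b
      = ∑ a ∈ s, ∑ b ∈ s, if ρ b ≤ ρ a then u a * u b else 0 := by
    rw [hD, sum_comm]
    simp only [mul_comm]
  rw [hsq, two_mul]
  nth_rw 1 [hD]
  rw [hD', ← sum_add_distrib]
  refine sum_le_sum fun a ha => ?_
  rw [← sum_add_distrib]
  refine sum_le_sum fun b hb => ?_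
  have hab := mul_nonneg (hu a ha) (hu b hb)
  rcases eq_or_ne a b with rfl | hne
  · simp
  · rcases le_total (ρ a) (ρ b) with h | h <;> simp [hne, h] <;> split_ifs <;> linarith

/-- `W h₁(u) - h₂(u)` on `s`, where `h₂(u) = ∑_{a ≤ b} u_a u_b`. -/
noncomputable def roundingBound {ι : Type*} (W : ℝ) (s : Finset ι) (u : ι → ℝ) : ℝ :=
  W * ∑ a ∈ s, u a - ((∑ a ∈ s, u a) ^ 2 + ∑ a ∈ s, u a ^ 2) / 2

section RoundingBound

variable {κ ι : Type*} {W : ℝ}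

lemma roundingBound_map (e : κ ↪ ι) (s : Finset κ) (u : ι → ℝ) :
    roundingBound W (s.map e) u = roundingBound W s (u ∘ e) := by
  simp only [roundingBound, sum_map, Function.comp_apply]

lemma roundingBound_mono {s : Finset κ} {u v : κ → ℝ} (huv : ∀ a ∈ s, u a ≤ v a)
    (hv : ∀ a ∈ s, ∑ b ∈ s, v b + v a ≤ W) :
    roundingBound W s u ≤ roundingBound W s v := by
  set S := ∑ b ∈ s, u b
  set T := ∑ b ∈ s, v b
  have hST : S ≤ T := sum_le_sum huv
  have hdiff : roundingBound W s v - roundingBound W s u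
      = ∑ a ∈ s, (v a - u a) * (W - (T + S) / 2 - (v a + u a) / 2) := by
    have h : ∀ a, (v a - u a) * (W - (T + S) / 2 - (v a + u a) / 2)
        = (W - (T + S) / 2) * v a - (W - (T + S) / 2) * u a - (v a ^ 2 / 2 - u a ^ 2 / 2) :=
      fun a => by ring
    simp only [h, sum_sub_distrib, ← mul_sum, ← sum_div, roundingBound, S, T]
    ring
  have hterms : 0 ≤ ∑ a ∈ s, (v a - u a) * (W - (T + S) / 2 - (v a + u a) / 2) :=
    sum_nonneg fun a ha => mul_nonneg (sub_nonneg.2 (huv a ha))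
      (by linarith [huv a ha, hv a ha])
  linarith

lemma roundingBound_nonneg {s : Finset κ} {v : κ → ℝ} (hv₀ : ∀ a ∈ s, 0 ≤ v a)
    (hv : ∀ a ∈ s, ∑ b ∈ s, v b + v a ≤ W) : 0 ≤ roundingBound W s v := by
  simpa [roundingBound] using roundingBound_mono (u := 0) hv₀ hv

end RoundingBound

section Rounding

variable {ι : Type*} [DecidableEq ι] (I : Finset ι) (x : ι → ℝ)

noncomputable def roundAt (t : ℝ) (k : ι) : ℤ :=
  if k ∈ I then ⌊x k⌋ + if t ≤ Int.fract (x k) then 1 else 0 else 0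

variable {I x}

lemma sub_roundAt (hx : ∀ k ∉ I, x k = 0) (t : ℝ) (k : ι) :
    x k - roundAt I x t k =
      if k ∈ I then Int.fract (x k) - if t ≤ Int.fract (x k) then 1 else 0 else 0 := by
  unfold roundAt
  split_ifs with hk
  · push_cast; rw [← Int.self_sub_floor]; ring
  · push_cast; rw [← Int.self_sub_floor]; ring
  · simp [hx k hk]

lemma sum_sub_roundAt_mul [Fintype ι] (hx : ∀ k ∉ I, x k = 0) (t : ℝ) (u : ι → ℝ) :
    ∑ k, (x k - roundAt I x t k) * u k =
      ∑ k ∈ I, Int.fract (x k) * u k - ∑ k ∈ I with t ≤ Int.fract (x k), u k := by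
  simp only [sub_roundAt hx, ite_mul, zero_mul, sub_mul, one_mul, sum_ite_mem, univ_inter,
    sum_sub_distrib, sum_filter]

lemma sub_one_le_sub_roundAt (hx : ∀ k ∉ I, x k = 0) {t : ℝ} (ht : t ≤ 1) (k : ι) :
    t - 1 ≤ x k - roundAt I x t k := by
  rw [sub_roundAt hx]
  have := Int.fract_nonneg (x k)
  split_ifs <;> linarith

variable [Fintype ι] {u : ι → ℝ} {W μ : ℝ}

lemma exists_roundAt_of_le (hx : ∀ k ∉ I, x k = 0) (hW : 0 ≤ W) {t : ℝ} (ht : t ≤ 1)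
    (h : ∑ k ∈ I, Int.fract (x k) * u k - ∑ k ∈ I with t ≤ Int.fract (x k), u k - μ
      ≤ W * (t - 1)) :
    ∃ z : ι → ℤ, ∑ k, (x k - z k) * u k ≤ μ ∧
      ∀ k, ∑ j, (x j - z j) * u j - μ ≤ W * (x k - z k) := by
  refine ⟨roundAt I x t, ?_, fun k => ?_⟩ <;> rw [sum_sub_roundAt_mul hx]
  · nlinarith
  · exact h.trans (mul_le_mul_of_nonneg_left (sub_one_le_sub_roundAt hx ht k) hW)

theorem exists_int_facet_ineqs (hu : ∀ k, 0 ≤ u k) (hx : ∀ k ∉ I, x k = 0)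
    (hW : ∑ k ∈ I, u k < W) (hμ : roundingBound W I u ≤ μ * W) :
    ∃ z : ι → ℤ, ∑ k, (x k - z k) * u k ≤ μ ∧
      ∀ k, ∑ j, (x j - z j) * u j - μ ≤ W * (x k - z k) := by
  set ρ := fun k => Int.fract (x k)
  set A := ∑ k ∈ I, ρ k * u k
  set σ := ∑ k ∈ I, u k
  have hW₀ : 0 ≤ W := (sum_nonneg fun k _ => hu k).trans hW.le
  by_contra hno
  have hfail : ∀ t ≤ 1, W * (t - 1) < A - ∑ k ∈ I with t ≤ ρ k, u k - μ :=
    fun t ht => lt_of_not_ge fun h => hno (exists_roundAt_of_le hx hW₀ ht h)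
  have hA : μ < A := by
    have h := hfail 1 le_rfl
    rwa [filter_false_of_mem fun k _ => not_le.2 (Int.fract_lt_one (x k)), sum_empty,
      sub_self, mul_zero, sub_zero, sub_pos] at h
  have havg : ∑ a ∈ I, u a * (W * (ρ a - 1))
      ≤ ∑ a ∈ I, u a * (A - ∑ k ∈ I with ρ a ≤ ρ k, u k - μ) :=
    sum_le_sum fun a _ =>
      mul_le_mul_of_nonneg_left (hfail _ (Int.fract_lt_one (x a)).le).le (hu a)
  have hL : ∑ a ∈ I, u a * (W * (ρ a - 1)) = W * A - W * σ := by
    simp only [A, σ, mul_sum, ← sum_sub_distrib]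
    exact sum_congr rfl fun a _ => by ring
  have hR : ∑ a ∈ I, u a * (A - ∑ k ∈ I with ρ a ≤ ρ k, u k - μ)
      = A * σ - ∑ a ∈ I, u a * ∑ k ∈ I with ρ a ≤ ρ k, u k - μ * σ := by
    simp only [σ, mul_sub, sum_sub_distrib, ← sum_mul]
    ring
  rw [hL, hR] at havg
  have hpairs := sq_sum_add_sum_sq_le_two_mul_sum_filter_le I (fun a _ => hu a) ρ
  unfold roundingBound at hμ
  nlinarith [mul_pos (sub_pos.2 hA) (sub_pos.2 hW)]

end Rounding

lemma sum_smul_mem_sum_smul_convexHull {ι E : Type*} [Fintype ι] [Nonempty ι]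
    [AddCommGroup E] [Module ℝ E] (p : ι → E) {w : ι → ℝ} (hw : ∀ t, 0 ≤ w t) :
    ∑ t, w t • p t ∈ (∑ t, w t) • convexHull ℝ (Set.range p) := by
  rcases (sum_nonneg fun t _ => hw t).eq_or_lt with h | h
  · have hw₀ : ∀ t, w t = 0 := fun t =>
      (sum_eq_zero_iff_of_nonneg fun t _ => hw t).1 h.symm t (mem_univ t)
    rw [← h, Set.zero_smul_set ((Set.range_nonempty p).mono (subset_convexHull ℝ _))]
    simp [hw₀]
  · rw [← smul_inv_smul₀ h.ne' (∑ t, w t • p t)]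
    exact Set.smul_mem_smul_set <| univ.centerMass_mem_convexHull (fun t _ => hw t) h
      fun t _ => Set.mem_range_self t

section CoordinateComplement

variable {K ι : Type*} [Field K] [Fintype ι] [DecidableEq ι]

lemma Submodule.exists_sup_pi_bot_eq_top (n : ℕ) (V : Submodule K (ι → K))
    (hV : Fintype.card ι ≤ Module.finrank K V + n) :
    ∃ I : Finset ι, #I ≤ n ∧ V ⊔ Submodule.pi (↑I)ᶜ (fun _ => ⊥) = ⊤ := by
  induction n generalizing V with
  | zero =>
    refine ⟨∅, le_rfl, top_le_iff.1 (le_sup_left.trans_eq' ?_).ge⟩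
    refine Submodule.eq_top_of_finrank_eq (le_antisymm (Submodule.finrank_le V) ?_)
    simpa [Module.finrank_fintype_fun_eq_card] using hV
  | succ n ih =>
    by_cases htop : V = ⊤
    · exact ⟨∅, by simp, by simp [htop]⟩
    obtain ⟨j, hj⟩ : ∃ j, Pi.single j (1 : K) ∉ V := by
      by_contra! h
      refine htop (eq_top_iff.2 ?_)
      rw [← (Pi.basisFun K ι).span_eq, Submodule.span_le]
      rintro _ ⟨j, rfl⟩
      simpa using h j
    have hlt : V < V ⊔ K ∙ Pi.single j 1 :=
      lt_of_le_of_ne le_sup_left fun h =>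
        hj (h ▸ Submodule.mem_sup_right (Submodule.mem_span_singleton_self _))
    obtain ⟨I, hI, hIV⟩ := ih (V ⊔ K ∙ Pi.single j 1)
      (hV.trans (by linarith [Submodule.finrank_lt_finrank_of_lt hlt]))
    refine ⟨insert j I, (card_insert_le j I).trans (by omega), eq_top_iff.2 (hIV ▸ ?_)⟩
    set P := Submodule.pi (↑(insert j I) : Set ι)ᶜ (fun _ => (⊥ : Submodule K K))
    have hIP : Submodule.pi (↑I)ᶜ (fun _ => ⊥) ≤ P := fun x hx =>
      Submodule.mem_pi.2 fun k hk => Submodule.mem_pi.1 hx k fun h => hk (by simp [h])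
    have hjP : Pi.single j (1 : K) ∈ P :=
      Submodule.mem_pi.2 fun k hk => by simp [Pi.single_eq_of_ne (show k ≠ j by simp_all)]
    exact sup_le (sup_le le_sup_left
      (((Submodule.span_singleton_le_iff_mem _ _).2 hjP).trans le_sup_right))
      (hIP.trans le_sup_right)

lemma AffineSubspace.exists_mem_forall_notMem_eq_zero (U : AffineSubspace K (ι → K))
    (hU : (U : Set (ι → K)).Nonempty) {i : ℕ} (hi : i ≤ Fintype.card ι)
    (hdim : Module.finrank K U.direction = Module.finrank K (ι → K) - i) :
    ∃ I : Finset ι, #I = i ∧ ∃ c ∈ U, ∀ k ∉ I, c k = 0 := by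
  rw [Module.finrank_fintype_fun_eq_card] at hdim
  obtain ⟨I₀, hI₀, htop⟩ := Submodule.exists_sup_pi_bot_eq_top i U.direction (by omega)
  obtain ⟨I, hI₀I, hI⟩ := Finset.exists_superset_card_eq hI₀ hi
  obtain ⟨c, hcU, hcI₀⟩ := AffineSubspace.inter_nonempty_of_nonempty_of_sup_direction_eq_top hU
    ⟨0, Submodule.zero_mem _⟩ (by rwa [Submodule.toAffineSubspace_direction])
  refine ⟨I, hI, c, hcU, fun k hk => ?_⟩
  simpa using Submodule.mem_pi.1 hcI₀ k fun h => hk (hI₀I h)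

end CoordinateComplement

lemma Fin.val_le_of_strictMono {m n : ℕ} {f : Fin m → Fin n} (hf : StrictMono f) (a : Fin m) :
    (a : ℕ) ≤ f a := by
  obtain ⟨k, hk⟩ := a
  induction k with
  | zero => exact Nat.zero_le _
  | succ k ih =>
    exact (ih (by omega)).trans_lt (hf (show (⟨k, by omega⟩ : Fin m) < ⟨k + 1, hk⟩ from
      Nat.lt_succ_self k))

section WeightedSimplex

variable {d i : ℕ} {ω : Fin (d + 1) → ℝ}

lemma wSimplex_eq_convexHull_range (ω : Fin (d + 1) → ℝ) :
    wSimplex d ω = convexHull ℝ (Set.range (Fin.cons (fun _ => -ω 0)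
      fun j : Fin d => Pi.single j (ω j.succ) : Fin (d + 1) → Fin d → ℝ)) := by
  rw [Fin.range_cons]
  rfl

lemma mem_smul_wSimplex (hω : ∀ j, 0 < ω j) {μ : ℝ} {y : Fin d → ℝ}
    (h₁ : ∑ k, y k * (ω k.succ)⁻¹ ≤ μ)
    (h₂ : ∀ k, ∑ j, y j * (ω j.succ)⁻¹ - μ ≤ (∑ j, (ω j)⁻¹) * y k) :
    y ∈ μ • wSimplex d ω := by
  set W := ∑ j, (ω j)⁻¹
  set f := ∑ k, y k * (ω k.succ)⁻¹
  have hW : 0 < W := sum_pos (fun j _ => inv_pos.2 (hω j)) univ_nonempty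
  have hWsplit : W = (ω 0)⁻¹ + ∑ j : Fin d, (ω j.succ)⁻¹ := Fin.sum_univ_succ _
  -- barycentric coordinates: `a/ω₀` on `-ω₀ 𝟙` and `(y_j + a)/ω_{j+1}` on `ω_{j+1} e_j`
  set a := (μ - f) / W
  have ha : a * W = μ - f := div_mul_cancel₀ _ hW.ne'
  set w : Fin (d + 1) → ℝ := Fin.cons (a * (ω 0)⁻¹) fun j => (y j + a) * (ω j.succ)⁻¹
  have hw : ∀ t, 0 ≤ w t := by
    refine Fin.cases ?_ fun j => ?_
    · exact mul_nonneg (div_nonneg (by linarith) hW.le) (inv_pos.2 (hω 0)).le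
    · refine mul_nonneg ?_ (inv_pos.2 (hω _)).le
      have : -a ≤ y j := by
        rw [neg_le, ← mul_le_mul_iff_of_pos_right hW, ha]
        linarith [h₂ j, mul_comm W (y j)]
      linarith
  have hsum : ∑ t, w t = μ := by
    simp only [w, Fin.sum_univ_succ, Fin.cons_zero, Fin.cons_succ, add_mul, sum_add_distrib,
      ← mul_sum]
    linear_combination ha - a * hWsplit
  rw [wSimplex_eq_convexHull_range, ← hsum]
  convert sum_smul_mem_sum_smul_convexHull _ hw
  ext k
  simp [w, Fin.sum_univ_succ, Pi.single_apply, (hω _).ne']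

lemma Fin.sum_univ_eq_add_sum_filter_le_add_sum_filter_lt {M : Type*} [AddCommMonoid M]
    (f : Fin (d + 1) → M) (i : ℕ) :
    ∑ k, f k = f 0 + ∑ j ∈ univ.filter (fun j : Fin (d + 1) => 1 ≤ (j : ℕ) ∧ (j : ℕ) ≤ i), f j
      + ∑ k ∈ univ.filter (fun k : Fin (d + 1) => i + 1 ≤ (k : ℕ)), f k := by
  have hrest : univ.filter (fun k : Fin (d + 1) => ¬(1 ≤ (k : ℕ) ∧ (k : ℕ) ≤ i))
      = insert 0 (univ.filter fun k : Fin (d + 1) => i + 1 ≤ (k : ℕ)) := by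
    ext k
    simp only [mem_filter, mem_univ, true_and, mem_insert, Fin.ext_iff, Fin.val_zero]
    omega
  rw [← sum_filter_add_sum_filter_not univ fun j : Fin (d + 1) => 1 ≤ (j : ℕ) ∧ (j : ℕ) ≤ i,
    hrest, sum_insert (by simp)]
  abel

lemma filter_one_le_le_eq_map (h : i ≤ d) :
    univ.filter (fun j : Fin (d + 1) => 1 ≤ (j : ℕ) ∧ (j : ℕ) ≤ i)
      = univ.map ((Fin.castLEEmb h).trans (Fin.succEmb d)) := by
  ext j
  simp only [mem_filter, mem_univ, true_and, mem_map, Function.Embedding.trans_apply,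
    Fin.castLEEmb_apply, Fin.coe_succEmb, Fin.ext_iff, Fin.val_succ, Fin.val_castLE]
  constructor
  · rintro ⟨h₁, h₂⟩
    exact ⟨⟨j - 1, by omega⟩, by simp only; omega⟩
  · rintro ⟨a, ha⟩
    omega

lemma intersectionBound_numerator_eq (ω : Fin (d + 1) → ℝ) (i : ℕ) :
    ((ω 0)⁻¹ + ∑ k ∈ univ.filter (fun k : Fin (d + 1) => i + 1 ≤ (k : ℕ)), (ω k)⁻¹) *
          (∑ j ∈ univ.filter (fun j : Fin (d + 1) => 1 ≤ (j : ℕ) ∧ (j : ℕ) ≤ i), (ω j)⁻¹) +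
        ∑ s ∈ univ.filter (fun s : Fin (d + 1) => 1 ≤ (s : ℕ) ∧ (s : ℕ) ≤ i),
          ∑ t ∈ univ.filter (fun t : Fin (d + 1) => (s : ℕ) < (t : ℕ) ∧ (t : ℕ) ≤ i),
            (ω s * ω t)⁻¹
      = roundingBound (∑ k, (ω k)⁻¹)
          (univ.filter fun j : Fin (d + 1) => 1 ≤ (j : ℕ) ∧ (j : ℕ) ≤ i) fun j => (ω j)⁻¹ := by
  rw [Fin.sum_univ_eq_add_sum_filter_le_add_sum_filter_lt (fun k => (ω k)⁻¹) i]
  set F := univ.filter fun j : Fin (d + 1) => 1 ≤ (j : ℕ) ∧ (j : ℕ) ≤ i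
  have hpairs : ∑ s ∈ F, ∑ t ∈ univ.filter (fun t : Fin (d + 1) => (s : ℕ) < t ∧ (t : ℕ) ≤ i),
      (ω s * ω t)⁻¹ = ∑ s ∈ F, ∑ t ∈ F with s < t, (ω s)⁻¹ * (ω t)⁻¹ := by
    refine sum_congr rfl fun s hs => sum_congr ?_ fun t _ => mul_inv _ _
    ext t
    simp only [F, mem_filter, mem_univ, true_and, Fin.lt_def] at hs ⊢
    omega
  rw [hpairs, roundingBound]
  linear_combination (-1 / 2 : ℝ) * sq_sum_eq_sum_sq_add_two_mul_sum_lt F fun j => (ω j)⁻¹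

lemma sum_filter_le_inv_add_inv_le (hω : ∀ j, 0 < ω j) (hmono : Monotone ω) (a : Fin (d + 1)) :
    ∑ j ∈ univ.filter (fun j : Fin (d + 1) => 1 ≤ (j : ℕ) ∧ (j : ℕ) ≤ i), (ω j)⁻¹ + (ω a)⁻¹
      ≤ ∑ k, (ω k)⁻¹ := by
  rw [Fin.sum_univ_eq_add_sum_filter_le_add_sum_filter_lt _ i]
  have h₀ : (ω a)⁻¹ ≤ (ω 0)⁻¹ := inv_anti₀ (hω 0) (hmono (Fin.zero_le a))
  have hrest : 0 ≤ ∑ k ∈ univ.filter (fun k : Fin (d + 1) => i + 1 ≤ (k : ℕ)), (ω k)⁻¹ :=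
    sum_nonneg fun k _ => (inv_pos.2 (hω k)).le
  linarith

lemma roundingBound_le_roundingBound_filter_le (hω : ∀ j, 0 < ω j) (hmono : Monotone ω)
    {I : Finset (Fin d)} (hI : #I = i) :
    roundingBound (∑ k, (ω k)⁻¹) I (fun k => (ω k.succ)⁻¹)
      ≤ roundingBound (∑ k, (ω k)⁻¹)
          (univ.filter fun j : Fin (d + 1) => 1 ≤ (j : ℕ) ∧ (j : ℕ) ≤ i) fun j => (ω j)⁻¹ := by
  have hid : i ≤ d := hI ▸ (card_le_univ I).trans_eq (Fintype.card_fin d)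
  rw [← map_orderEmbOfFin_univ I hI, filter_one_le_le_eq_map hid, roundingBound_map,
    roundingBound_map]
  refine roundingBound_mono (fun a _ => inv_anti₀ (hω _) (hmono ?_)) fun a _ => ?_
  · exact Fin.succ_le_succ_iff.2 (Fin.val_le_of_strictMono (I.orderEmbOfFin hI).strictMono a)
  · have h := sum_filter_le_inv_add_inv_le (i := i) hω hmono (Fin.castLE hid a).succ
    rwa [filter_one_le_le_eq_map hid, sum_map] at h

lemma mem_smul_wSimplex_add_intLat (hω : ∀ j, 0 < ω j) {I : Finset (Fin d)} {c : Fin d → ℝ}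
    (hc : ∀ k ∉ I, c k = 0) {μ : ℝ}
    (hμ : roundingBound (∑ j, (ω j)⁻¹) I (fun k => (ω k.succ)⁻¹) ≤ μ * ∑ j, (ω j)⁻¹) :
    c ∈ μ • wSimplex d ω + intLat d := by
  have hI : ∑ k ∈ I, (ω k.succ)⁻¹ < ∑ j, (ω j)⁻¹ := by
    rw [Fin.sum_univ_succ]
    exact lt_add_of_pos_of_le (inv_pos.2 (hω 0))
      (sum_le_sum_of_subset_of_nonneg (subset_univ I) fun k _ _ => (inv_pos.2 (hω _)).le)
  obtain ⟨z, h₁, h₂⟩ := exists_int_facet_ineqs (fun k => (inv_pos.2 (hω _)).le) hc hI hμ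
  exact ⟨fun k => c k - z k, mem_smul_wSimplex hω h₁ h₂, fun k => z k, fun k => ⟨z k, rfl⟩,
    by ext; simp⟩

end WeightedSimplex

/-- **Proposition (intersection bound for weighted terminal simplices).** For
`0 < ω₀ ≤ ω₁ ≤ … ≤ ω_d` and `i < d`,
`μ_i(S(ω)) ≤ [(1/ω₀ + ∑_{k=i+1}^d 1/ω_k)(∑_{j=1}^i 1/ω_j) + ∑_{1≤s<t≤i} 1/(ω_s ω_t)]
  / ∑_{k=0}^d 1/ω_k`. -/
theorem covMin_wSimplex_le_intersection_bound
    (d i : ℕ) (hid : i < d)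
    (ω : Fin (d + 1) → ℝ) (hω : ∀ j, 0 < ω j) (hmono : Monotone ω) :
    covMin i (wSimplex d ω) (intLat d) ≤
      (((ω 0)⁻¹ + ∑ k ∈ Finset.univ.filter (fun k : Fin (d + 1) => i + 1 ≤ (k : ℕ)), (ω k)⁻¹) *
          (∑ j ∈ Finset.univ.filter
            (fun j : Fin (d + 1) => 1 ≤ (j : ℕ) ∧ (j : ℕ) ≤ i), (ω j)⁻¹) +
        ∑ s ∈ Finset.univ.filter (fun s : Fin (d + 1) => 1 ≤ (s : ℕ) ∧ (s : ℕ) ≤ i),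
          ∑ t ∈ Finset.univ.filter
            (fun t : Fin (d + 1) => (s : ℕ) < (t : ℕ) ∧ (t : ℕ) ≤ i), (ω s * ω t)⁻¹) /
      (∑ k : Fin (d + 1), (ω k)⁻¹) := by
  have hW : 0 < ∑ k, (ω k)⁻¹ := sum_pos (fun j _ => inv_pos.2 (hω j)) univ_nonempty
  rw [intersectionBound_numerator_eq]
  refine csInf_le ⟨0, fun _ hμ => hμ.1⟩ ⟨div_nonneg ?_ hW.le, fun U hU hdim => ?_⟩
  · exact roundingBound_nonneg (fun j _ => (inv_pos.2 (hω j)).le)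
      fun a _ => sum_filter_le_inv_add_inv_le hω hmono a
  obtain ⟨I, hI, c, hcU, hc⟩ :=
    U.exists_mem_forall_notMem_eq_zero hU (by simpa using hid.le) hdim
  refine ⟨c, mem_smul_wSimplex_add_intLat hω hc ?_, hcU⟩
  rw [div_mul_cancel₀ _ hW.ne']
  exact roundingBound_le_roundingBound_filter_le hω hmono hI
end
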